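/- arXiv:1904.03505 — 4 statements merged into one kernel-verified Lean document; each statement's English description precedes it below -/
import Mathlib

section
/- A request profile P is feasible for the fleet (p̄, x) if and only if its E-p transform is dominated pointwise by the capacity curve of the fleet, i.e. P ∈ F_{p̄,x} ⟺ E_P(p) ≤ Ω_{p̄,x}(p) for all p ≥ 0. -/
open MeasureTheory Set
open scoped ENNReal

/-- The E-p transform of a request profile `P`: the energy required above power level `p`. -/
noncomputable def Etrans (P : ℝ → ℝ) (p : ℝ) : ℝ≥0∞ :=
  ∫⁻ t in Ioi (0 : ℝ), ENNReal.ofReal (max (P t - p) 0)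

/-- The worst-case request profile `R(t) = Σᵢ p̄ᵢ · 1_{[0, xᵢ)}(t)`. -/
noncomputable def Rprof (n : ℕ) (pbar x : Fin n → ℝ) (t : ℝ) : ℝ :=
  ∑ i, Set.indicator (Ico (0 : ℝ) (x i)) (fun _ => pbar i) t

/-- The capacity curve of the fleet `(p̄, x)`. -/
noncomputable def capacity (n : ℕ) (pbar x : Fin n → ℝ) (p : ℝ) : ℝ≥0∞ :=
  Etrans (Rprof n pbar x) p

/-- A request profile `P` is feasible for the fleet `(p̄, x)`. -/
def Feasible (n : ℕ) (pbar x : Fin n → ℝ) (P : ℝ → ℝ) : Prop :=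
  ∃ u : ℝ → Fin n → ℝ, Measurable u ∧
    (∀ᵐ t ∂(volume.restrict (Ici (0 : ℝ))),
      (∑ i, u t i) = P t ∧ ∀ i, 0 ≤ u t i ∧ u t i ≤ pbar i) ∧
    ∀ t : ℝ, 0 ≤ t → ∀ i, (∫ s in (0 : ℝ)..t, u s i) ≤ pbar i * x i


lemma measurable_Rprof (n : ℕ) (pbar x : Fin n → ℝ) : Measurable (Rprof n pbar x) := by
  apply Finset.measurable_sum
  intro i _
  exact (measurable_const.indicator measurableSet_Ico)

lemma Rprof_nonneg (n : ℕ) (pbar x : Fin n → ℝ) (hp : ∀ i, 0 ≤ pbar i) (t : ℝ) :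
    0 ≤ Rprof n pbar x t := by
  apply Finset.sum_nonneg
  intro i _
  exact Set.indicator_nonneg (fun _ _ => hp i) t

lemma Rprof_antitone (n : ℕ) (pbar x : Fin n → ℝ) (hp : ∀ i, 0 ≤ pbar i)
    {s t : ℝ} (hs : 0 ≤ s) (hst : s ≤ t) : Rprof n pbar x t ≤ Rprof n pbar x s := by
  apply Finset.sum_le_sum
  intro i _
  by_cases ht : t ∈ Ico (0:ℝ) (x i)
  · rw [Set.indicator_of_mem ht, Set.indicator_of_mem (show s ∈ Ico (0:ℝ) (x i) from ⟨hs, lt_of_le_of_lt hst ht.2⟩)]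
  · rw [Set.indicator_of_notMem ht]
    exact Set.indicator_nonneg (fun _ _ => hp i) s

/-- lintegral over `Ioi 0` of an `Ico 0 x`-indicator of the constant `c ≥ 0`. -/
lemma lintegral_indicator_Ico (c x : ℝ) (hc : 0 ≤ c) :
    ∫⁻ t in Ioi (0:ℝ), ENNReal.ofReal ((Ico (0:ℝ) x).indicator (fun _ => c) t)
      = ENNReal.ofReal c * ENNReal.ofReal x := by
  have h : ∀ t : ℝ, ENNReal.ofReal ((Ico (0:ℝ) x).indicator (fun _ => c) t)
      = (Ico (0:ℝ) x).indicator (fun _ => ENNReal.ofReal c) t := by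
    intro t
    by_cases ht : t ∈ Ico (0:ℝ) x <;> simp [ht]
  simp_rw [h]
  rw [lintegral_indicator measurableSet_Ico]
  rw [Measure.restrict_restrict measurableSet_Ico]
  have : (Ico (0:ℝ) x) ∩ Ioi 0 = Ioo 0 x := by
    ext t; constructor
    · rintro ⟨⟨_, h2⟩, h3⟩; exact ⟨h3, h2⟩
    · rintro ⟨h1, h2⟩; exact ⟨⟨le_of_lt h1, h2⟩, h1⟩
  rw [this, lintegral_const, Measure.restrict_apply_univ, Real.volume_Ioo, sub_zero]

/-- monotone-union decomposition of the lintegral on `Ioi 0`. -/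
lemma lintegral_Ioi_eq_iSup (f : ℝ → ℝ≥0∞) (hf : Measurable f) :
    ∫⁻ t in Ioi (0:ℝ), f t = ⨆ k : ℕ, ∫⁻ t in Ioc (0:ℝ) k, f t := by
  have h1 : ∀ k : ℕ, ∫⁻ t in Ioc (0:ℝ) k, f t
      = ∫⁻ t, (Ioc (0:ℝ) k).indicator f t := fun k =>
    (lintegral_indicator measurableSet_Ioc f).symm
  have h2 : ∫⁻ t in Ioi (0:ℝ), f t = ∫⁻ t, (Ioi (0:ℝ)).indicator f t :=
    (lintegral_indicator measurableSet_Ioi f).symm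
  simp_rw [h1, h2]
  rw [← lintegral_iSup]
  · congr 1
    ext t
    by_cases ht : t ∈ Ioi (0:ℝ)
    · rw [Set.indicator_of_mem ht]
      obtain ⟨k, hk⟩ := exists_nat_ge t
      apply le_antisymm
      · apply le_iSup_of_le k
        rw [Set.indicator_of_mem (show t ∈ Ioc (0:ℝ) k from ⟨ht, hk⟩)]
      · apply iSup_le; intro k'
        by_cases h : t ∈ Ioc (0:ℝ) k'
        · rw [Set.indicator_of_mem h]
        · rw [Set.indicator_of_notMem h]; exact zero_le
    · rw [Set.indicator_of_notMem ht]
      apply le_antisymm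
      · exact zero_le
      · apply iSup_le; intro k
        rw [Set.indicator_of_notMem (fun h => ht h.1)]
  · intro k; exact hf.indicator measurableSet_Ioc
  · intro a b hab t
    simp only
    by_cases h : t ∈ Ioc (0:ℝ) a
    · rw [Set.indicator_of_mem h,
        Set.indicator_of_mem (show t ∈ Ioc (0:ℝ) b from ⟨h.1, le_trans h.2 (Nat.cast_le.mpr hab)⟩)]
    · rw [Set.indicator_of_notMem h]; exact zero_le

lemma capacity_lt_top (n : ℕ) (pbar x : Fin n → ℝ) (hp : ∀ i, 0 ≤ pbar i) (p : ℝ)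
    (hpp : 0 ≤ p) : capacity n pbar x p < ⊤ := by
  have hbd : ∀ t : ℝ, ENNReal.ofReal (max (Rprof n pbar x t - p) 0)
      ≤ ∑ i, ENNReal.ofReal ((Ico (0:ℝ) (x i)).indicator (fun _ => pbar i) t) := by
    intro t
    have h1 : max (Rprof n pbar x t - p) 0 ≤ Rprof n pbar x t := by
      apply max_le _ _
      · linarith
      · exact Finset.sum_nonneg fun i _ => Set.indicator_nonneg (fun _ _ => hp i) t
    calc ENNReal.ofReal (max (Rprof n pbar x t - p) 0) ≤ ENNReal.ofReal (Rprof n pbar x t) :=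
          ENNReal.ofReal_le_ofReal h1
      _ = ∑ i, ENNReal.ofReal ((Ico (0:ℝ) (x i)).indicator (fun _ => pbar i) t) := by
          rw [Rprof, ENNReal.ofReal_sum_of_nonneg]
          intro i _; exact Set.indicator_nonneg (fun _ _ => hp i) t
  calc capacity n pbar x p
      ≤ ∫⁻ t in Ioi (0:ℝ), ∑ i, ENNReal.ofReal ((Ico (0:ℝ) (x i)).indicator (fun _ => pbar i) t) :=
        lintegral_mono fun t => hbd t
    _ = ∑ i, ∫⁻ t in Ioi (0:ℝ), ENNReal.ofReal ((Ico (0:ℝ) (x i)).indicator (fun _ => pbar i) t) := by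
        apply lintegral_finset_sum
        intro i _
        exact (ENNReal.measurable_ofReal.comp (measurable_const.indicator measurableSet_Ico))
    _ = ∑ i, ENNReal.ofReal (pbar i) * ENNReal.ofReal (x i) := by
        exact Finset.sum_congr rfl fun i _ => lintegral_indicator_Ico _ _ (hp i)
    _ < ⊤ := by
        apply ENNReal.sum_lt_top.mpr
        intro i _
        exact ENNReal.mul_lt_top ENNReal.ofReal_lt_top ENNReal.ofReal_lt_top


/-- convert the prefix energy constraints into a lintegral bound on `Ioi 0`. -/
lemma energy_lintegral_bound (v : ℝ → ℝ) (hv : Measurable v) (c B : ℝ)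
    (hb : ∀ᵐ t ∂(volume.restrict (Ioi (0:ℝ))), 0 ≤ v t ∧ v t ≤ c)
    (hE : ∀ t : ℝ, 0 ≤ t → (∫ s in (0:ℝ)..t, v s) ≤ B) :
    ∫⁻ t in Ioi (0:ℝ), ENNReal.ofReal (v t) ≤ ENNReal.ofReal B := by
  rw [lintegral_Ioi_eq_iSup (fun t => ENNReal.ofReal (v t)) (ENNReal.measurable_ofReal.comp hv)]
  apply iSup_le
  intro k
  have hsub : (Ioc (0:ℝ) k) ⊆ Ioi 0 := Ioc_subset_Ioi_self
  have hbk : ∀ᵐ t ∂(volume.restrict (Ioc (0:ℝ) k)), 0 ≤ v t ∧ v t ≤ c :=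
    ae_restrict_of_ae_restrict_of_subset hsub hb
  have hint : IntegrableOn v (Ioc (0:ℝ) k) volume := by
    apply Integrable.mono' (integrable_const (max c 0))
    · exact hv.aestronglyMeasurable
    · filter_upwards [hbk] with t ht
      rw [Real.norm_eq_abs, abs_of_nonneg ht.1]
      exact le_max_of_le_left ht.2
  rw [← ofReal_integral_eq_lintegral_ofReal hint
    (by filter_upwards [hbk] with t ht using ht.1)]
  apply ENNReal.ofReal_le_ofReal
  rw [← intervalIntegral.integral_of_le (by positivity : (0:ℝ) ≤ (k:ℝ))]
  exact hE k (by positivity)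

/-- The chord bound: a channel with rate cap `pb` and energy cap `pb*x` contributes at most
`(pb - q) * x` of energy above the level `q`. -/
lemma chord_bound (v : ℝ → ℝ) (hv : Measurable v) (pb xx q : ℝ) (hpb : 0 < pb)
    (hxx : 0 ≤ xx) (hq0 : 0 ≤ q) (hqpb : q ≤ pb)
    (hb : ∀ᵐ t ∂(volume.restrict (Ioi (0:ℝ))), 0 ≤ v t ∧ v t ≤ pb)
    (hE : ∫⁻ t in Ioi (0:ℝ), ENNReal.ofReal (v t) ≤ ENNReal.ofReal (pb * xx)) :
    ∫⁻ t in Ioi (0:ℝ), ENNReal.ofReal (max (v t - q) 0) ≤ ENNReal.ofReal ((pb - q) * xx) := by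
  have key : ∀ᵐ t ∂(volume.restrict (Ioi (0:ℝ))),
      ENNReal.ofReal (max (v t - q) 0) ≤ ENNReal.ofReal ((pb - q)/pb) * ENNReal.ofReal (v t) := by
    filter_upwards [hb] with t ⟨h1, h2⟩
    rw [← ENNReal.ofReal_mul (div_nonneg (by linarith) hpb.le)]
    apply ENNReal.ofReal_le_ofReal
    rcases le_or_gt (v t) q with h | h
    · rw [max_eq_right (by linarith)]
      exact mul_nonneg (div_nonneg (by linarith) hpb.le) h1
    · rw [max_eq_left (by linarith)]
      rw [div_mul_eq_mul_div, le_div_iff₀ hpb]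
      nlinarith
  calc ∫⁻ t in Ioi (0:ℝ), ENNReal.ofReal (max (v t - q) 0)
      ≤ ∫⁻ t in Ioi (0:ℝ), ENNReal.ofReal ((pb - q)/pb) * ENNReal.ofReal (v t) :=
        lintegral_mono_ae key
    _ = ENNReal.ofReal ((pb - q)/pb) * ∫⁻ t in Ioi (0:ℝ), ENNReal.ofReal (v t) :=
        lintegral_const_mul _ (ENNReal.measurable_ofReal.comp hv)
    _ ≤ ENNReal.ofReal ((pb - q)/pb) * ENNReal.ofReal (pb * xx) := by
        exact mul_le_mul_right hE _
    _ = ENNReal.ofReal ((pb - q)/pb * (pb * xx)) :=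
        (ENNReal.ofReal_mul (div_nonneg (by linarith) hpb.le)).symm
    _ = ENNReal.ofReal ((pb - q) * xx) := by
        congr 1
        field_simp

/-- Rprof splits off its last channel. -/
lemma Rprof_succ (n : ℕ) (pbar x : Fin (n+1) → ℝ) (t : ℝ) :
    Rprof (n+1) pbar x t = Rprof n (Fin.init pbar) (Fin.init x) t
      + (Ico (0:ℝ) (x (Fin.last n))).indicator (fun _ => pbar (Fin.last n)) t := by
  rw [Rprof, Rprof, Fin.sum_univ_castSucc]
  rfl

/-- the pointwise capacity splitting inequality. -/
lemma capacity_pointwise (n : ℕ) (pbar x : Fin (n+1) → ℝ)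
    (hp : ∀ i, 0 < pbar i) (hx : ∀ i, 0 ≤ x i) (p : ℝ) (hpp : 0 ≤ p) (t : ℝ) (ht : 0 < t) :
    max (Rprof n (Fin.init pbar) (Fin.init x) t
        - (p - min (max (p - Rprof n (Fin.init pbar) (Fin.init x) (x (Fin.last n))) 0)
            (pbar (Fin.last n)))) 0
      + (Ico (0:ℝ) (x (Fin.last n))).indicator
          (fun _ => pbar (Fin.last n)
            - min (max (p - Rprof n (Fin.init pbar) (Fin.init x) (x (Fin.last n))) 0)
              (pbar (Fin.last n))) t
      ≤ max (Rprof (n+1) pbar x t - p) 0 := by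
  set R' := Rprof n (Fin.init pbar) (Fin.init x) with hR'
  set pl := pbar (Fin.last n) with hpl
  set xl := x (Fin.last n) with hxl
  set c := R' xl with hc
  set q := min (max (p - c) 0) pl with hq
  have hp' : ∀ i : Fin n, 0 ≤ Fin.init pbar i := fun i => (hp i.castSucc).le
  have hc0 : 0 ≤ c := Rprof_nonneg n _ _ hp' xl
  have hpl0 : 0 < pl := hp (Fin.last n)
  have hq0 : 0 ≤ q := le_min (le_max_right _ _) hpl0.le
  have hqpl : q ≤ pl := min_le_right _ _
  rw [Rprof_succ]
  by_cases hmem : t ∈ Ico (0:ℝ) xl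
  · rw [Set.indicator_of_mem hmem, Set.indicator_of_mem hmem]
    have hrc : c ≤ R' t := Rprof_antitone n _ _ hp' ht.le hmem.2.le
    rcases le_or_gt (p - q) (R' t) with h | h
    · rw [max_eq_left (by linarith)]
      have : R' t - (p - q) + (pl - q) = R' t + pl - p := by ring
      rw [this]
      exact le_max_left _ _
    · rw [max_eq_right (by linarith)]
      rw [zero_add]
      rcases le_or_gt (p - c) pl with h2 | h2
      · have hqval : p - c ≤ q := by
          rw [hq]
          exact le_min (le_max_left _ _) h2
        have : pl - q ≤ R' t + pl - p := by linarith
        exact le_trans this (le_max_left _ _)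
      · have hqval : q = pl := by
          rw [hq, min_eq_right]
          apply le_max_of_le_left
          linarith
        rw [hqval, sub_self]
        exact le_max_right _ _
  · rw [Set.indicator_of_notMem hmem, Set.indicator_of_notMem hmem, add_zero, add_zero]
    have hxlt : xl ≤ t := by
      rcases lt_or_ge t xl with h | h
      · exact absurd ⟨ht.le, h⟩ hmem
      · exact h
    have hrc : R' t ≤ c := Rprof_antitone n _ _ hp' (hx (Fin.last n)) hxlt
    rcases le_or_gt p c with h | h
    · have hqval : q = 0 := by
        rw [hq, max_eq_right (by linarith), min_eq_left hpl0.le]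
      rw [hqval, sub_zero]
    · have hqc : c ≤ p - q := by
        have : q ≤ p - c := by
          rw [hq]
          exact min_le_of_left_le (max_le (le_refl _) (by linarith))
        linarith
      rw [max_eq_right (by linarith)]
      exact le_max_right _ _

/-- Forward induction: the aggregate of a feasible schedule has E-p transform
dominated by the capacity. -/
lemma forward_aux : ∀ (n : ℕ) (pbar x : Fin n → ℝ), (∀ i, 0 < pbar i) → (∀ i, 0 ≤ x i) →
    ∀ u : ℝ → Fin n → ℝ, Measurable u →
    (∀ᵐ t ∂(volume.restrict (Ioi (0:ℝ))), ∀ i, 0 ≤ u t i ∧ u t i ≤ pbar i) →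
    (∀ i, ∫⁻ t in Ioi (0:ℝ), ENNReal.ofReal (u t i) ≤ ENNReal.ofReal (pbar i * x i)) →
    ∀ p : ℝ, 0 ≤ p →
      (∫⁻ t in Ioi (0:ℝ), ENNReal.ofReal (max (∑ i, u t i - p) 0)) ≤ capacity n pbar x p := by
  intro n
  induction n with
  | zero =>
    intro pbar x _ _ u _ _ _ p hpp
    have : ∀ t : ℝ, ENNReal.ofReal (max (∑ i : Fin 0, u t i - p) 0) = 0 := by
      intro t
      simp [ENNReal.ofReal_eq_zero, max_le_iff, hpp]
    simp_rw [this]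
    simp
  | succ n ih =>
    intro pbar x hp hx u hu hae henergy p hpp
    set pl := pbar (Fin.last n) with hpl
    set xl := x (Fin.last n) with hxl
    set c := Rprof n (Fin.init pbar) (Fin.init x) xl with hc
    set q := min (max (p - c) 0) pl with hq
    have hp' : ∀ i : Fin n, 0 ≤ Fin.init pbar i := fun i => (hp i.castSucc).le
    have hc0 : 0 ≤ c := Rprof_nonneg n _ _ hp' xl
    have hpl0 : 0 < pl := hp (Fin.last n)
    have hq0 : 0 ≤ q := le_min (le_max_right _ _) hpl0.le
    have hqpl : q ≤ pl := min_le_right _ _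
    have hqp : q ≤ p := by
      apply min_le_of_left_le
      exact max_le (by linarith) hpp
    have hp'0 : 0 ≤ p - q := by linarith
    -- decompose u
    set u' : ℝ → Fin n → ℝ := fun t i => u t i.castSucc with hu'def
    set v : ℝ → ℝ := fun t => u t (Fin.last n) with hvdef
    have hu' : Measurable u' := by
      apply measurable_pi_lambda
      intro i
      exact (measurable_pi_apply i.castSucc).comp hu
    have hv : Measurable v := (measurable_pi_apply (Fin.last n)).comp hu
    have hae' : ∀ᵐ t ∂(volume.restrict (Ioi (0:ℝ))),
        ∀ i : Fin n, 0 ≤ u' t i ∧ u' t i ≤ Fin.init pbar i := by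
      filter_upwards [hae] with t ht i
      exact ht i.castSucc
    have haev : ∀ᵐ t ∂(volume.restrict (Ioi (0:ℝ))), 0 ≤ v t ∧ v t ≤ pl := by
      filter_upwards [hae] with t ht
      exact ht (Fin.last n)
    have henergy' : ∀ i : Fin n, ∫⁻ t in Ioi (0:ℝ), ENNReal.ofReal (u' t i)
        ≤ ENNReal.ofReal (Fin.init pbar i * Fin.init x i) := fun i => henergy i.castSucc
    have hIH := ih (Fin.init pbar) (Fin.init x) (fun i => hp i.castSucc)
      (fun i => hx i.castSucc) u' hu' hae' henergy' (p - q) hp'0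
    have hchord := chord_bound v hv pl xl q hpl0 (hx (Fin.last n)) hq0 hqpl haev
      (henergy (Fin.last n))
    -- pointwise splitting of the aggregate
    have hsplit : ∀ᵐ t ∂(volume.restrict (Ioi (0:ℝ))),
        ENNReal.ofReal (max (∑ i, u t i - p) 0)
          ≤ ENNReal.ofReal (max (∑ i, u' t i - (p - q)) 0)
            + ENNReal.ofReal (max (v t - q) 0) := by
      apply ae_of_all
      intro t
      rw [← ENNReal.ofReal_add (le_max_right _ _) (le_max_right _ _)]
      apply ENNReal.ofReal_le_ofReal
      have hsum : ∑ i, u t i = ∑ i, u' t i + v t := Fin.sum_univ_castSucc (fun i => u t i)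
      rw [hsum]
      rcases le_or_gt (∑ i, u' t i + v t) p with h | h
      · rw [max_eq_right (by linarith)]
        positivity
      · rw [max_eq_left (by linarith)]
        have h1 : ∑ i, u' t i - (p - q) ≤ max (∑ i, u' t i - (p - q)) 0 := le_max_left _ _
        have h2 : v t - q ≤ max (v t - q) 0 := le_max_left _ _
        linarith
    calc ∫⁻ t in Ioi (0:ℝ), ENNReal.ofReal (max (∑ i, u t i - p) 0)
        ≤ ∫⁻ t in Ioi (0:ℝ), (ENNReal.ofReal (max (∑ i, u' t i - (p - q)) 0)
            + ENNReal.ofReal (max (v t - q) 0)) := lintegral_mono_ae hsplit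
      _ = (∫⁻ t in Ioi (0:ℝ), ENNReal.ofReal (max (∑ i, u' t i - (p - q)) 0))
            + ∫⁻ t in Ioi (0:ℝ), ENNReal.ofReal (max (v t - q) 0) := by
          apply lintegral_add_left
          apply ENNReal.measurable_ofReal.comp
          apply Measurable.max _ measurable_const
          exact (Finset.measurable_sum Finset.univ fun i _ =>
            (measurable_pi_apply i).comp hu').sub measurable_const
      _ ≤ capacity n (Fin.init pbar) (Fin.init x) (p - q) + ENNReal.ofReal ((pl - q) * xl) :=
          add_le_add hIH hchord
      _ ≤ capacity (n+1) pbar x p := by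
          rw [capacity, Etrans, capacity, Etrans,
            ENNReal.ofReal_mul (show (0:ℝ) ≤ pl - q by linarith),
            ← lintegral_indicator_Ico (pl - q) xl (by linarith)]
          rw [← lintegral_add_left]
          · apply lintegral_mono_ae
            rw [ae_restrict_iff' measurableSet_Ioi]
            apply ae_of_all
            intro t ht
            rw [← ENNReal.ofReal_add (le_max_right _ _)
              (Set.indicator_nonneg (fun _ _ => by linarith) t)]
            apply ENNReal.ofReal_le_ofReal
            exact capacity_pointwise n pbar x hp hx p hpp t ht
          · apply ENNReal.measurable_ofReal.comp
            exact ((measurable_Rprof n _ _).sub measurable_const).max measurable_const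

lemma backward_aux : ∀ (n : ℕ) (pbar x : Fin n → ℝ), (∀ i, 0 < pbar i) → (∀ i, 0 ≤ x i) →
    ∀ P : ℝ → ℝ, Measurable P → (∀ t, 0 ≤ t → 0 ≤ P t) →
    (∀ p : ℝ, 0 ≤ p → Etrans P p ≤ capacity n pbar x p) →
    ∃ u : ℝ → Fin n → ℝ, Measurable u ∧
      (∀ᵐ t ∂(volume.restrict (Ioi (0:ℝ))),
        (∑ i, u t i) = P t ∧ ∀ i, 0 ≤ u t i ∧ u t i ≤ pbar i) ∧
      ∀ t : ℝ, 0 ≤ t → ∀ i, (∫ s in (0:ℝ)..t, u s i) ≤ pbar i * x i := by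
  intro n
  induction n with
  | zero =>
    intro pbar x hp hx P hPm hPnn hdom
    refine ⟨fun _ _ => 0, measurable_const, ?_, ?_⟩
    · have h0 : Etrans P 0 = 0 := by
        apply le_antisymm _ (zero_le)
        refine le_trans (hdom 0 le_rfl) ?_
        have : ∀ t : ℝ, ENNReal.ofReal (max (Rprof 0 pbar x t - 0) 0) = 0 := by
          intro t
          simp [Rprof]
        rw [capacity, Etrans]
        simp_rw [this]
        simp
      rw [Etrans, lintegral_eq_zero_iff
        (show Measurable fun t => ENNReal.ofReal (max (P t - 0) 0) from ((hPm.sub measurable_const).max measurable_const).ennreal_ofReal)] at h0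
      filter_upwards [h0, ae_restrict_mem measurableSet_Ioi] with t ht hmem
      constructor
      · simp only [Finset.univ_eq_empty, Finset.sum_empty]
        simp only [Pi.zero_apply, ENNReal.ofReal_eq_zero] at ht
        have h1 : max (P t - 0) 0 ≤ 0 := ht
        have h2 : 0 ≤ P t := hPnn t (le_of_lt hmem)
        have := le_max_left (P t - 0) 0
        linarith [le_trans this h1]
      · intro i
        exact i.elim0
    · intro t ht i
      exact i.elim0
  | succ n ih =>
    intro pbar x hp hx P hPm hPnn hdom
    set pl := pbar (Fin.last n) with hpldef
    set xl := x (Fin.last n) with hxldef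
    have hpl0 : 0 < pl := hp (Fin.last n)
    have hxl0 : 0 ≤ xl := hx (Fin.last n)
    set Pp : ℝ → ℝ := fun t => max (P t) 0 with hPpdef
    have hPpm : Measurable Pp := hPm.max measurable_const
    -- integrability of Pp on Ioi 0
    have hPpint : IntegrableOn Pp (Ioi (0:ℝ)) volume := by
      constructor
      · exact hPpm.aestronglyMeasurable
      · have hPp0 : 0 ≤ᵐ[volume.restrict (Ioi (0:ℝ))] fun t => max (P t) 0 :=
          ae_of_all _ fun t => le_max_right _ _
        rw [hPpdef, hasFiniteIntegral_iff_ofReal hPp0]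
        have : (∫⁻ t in Ioi (0:ℝ), ENNReal.ofReal (Pp t)) = Etrans P 0 := by
          rw [Etrans]
          congr 1
          ext t
          rw [sub_zero]
        rw [this]
        exact lt_of_le_of_lt (hdom 0 le_rfl)
          (capacity_lt_top _ pbar x (fun i => (hp i).le) 0 le_rfl)
    -- the threshold function
    set F : ℝ → ℝ → ℝ := fun θ t => min pl (max (P t - max θ 0) 0) with hFdef
    set f : ℝ → ℝ := fun θ => ∫ t in Ioi (0:ℝ), F θ t with hfdef
    have hFm : ∀ θ, Measurable (F θ) :=
      fun θ => measurable_const.min ((hPm.sub measurable_const).max measurable_const)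
    have hFnn : ∀ θ t, 0 ≤ F θ t := fun θ t => le_min hpl0.le (le_max_right _ _)
    have hFle : ∀ θ t, F θ t ≤ Pp t := by
      intro θ t
      refine le_trans (min_le_right _ _) ?_
      apply max_le _ (le_max_right _ _)
      have : 0 ≤ max θ 0 := le_max_right _ _
      have := le_max_left (P t) 0
      linarith
    have hFint : ∀ θ, IntegrableOn (F θ) (Ioi (0:ℝ)) volume := by
      intro θ
      apply Integrable.mono' hPpint (hFm θ).aestronglyMeasurable
      apply ae_of_all
      intro t
      rw [Real.norm_eq_abs, abs_of_nonneg (hFnn θ t)]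
      exact hFle θ t
    have hfc : Continuous f := by
      apply continuous_of_dominated (fun θ => (hFm θ).aestronglyMeasurable)
        (fun θ => ae_of_all _ fun t => ?_) hPpint
      · apply ae_of_all
        intro t
        apply Continuous.min continuous_const
        apply Continuous.max _ continuous_const
        exact continuous_const.sub (continuous_id.max continuous_const)
      · rw [Real.norm_eq_abs, abs_of_nonneg (hFnn θ t)]
        exact hFle θ t
    have hfnn : ∀ θ, 0 ≤ f θ := fun θ => setIntegral_nonneg measurableSet_Ioi
      (fun t _ => hFnn θ t)
    -- f vanishes at M = total power
    set M : ℝ := ∑ i, pbar i with hMdef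
    have hM0 : 0 ≤ M := Finset.sum_nonneg fun i _ => (hp i).le
    have hfM : f M = 0 := by
      have hcapM : capacity (n+1) pbar x M = 0 := by
        rw [capacity, Etrans]
        have : ∀ t : ℝ, ENNReal.ofReal (max (Rprof (n+1) pbar x t - M) 0) = 0 := by
          intro t
          rw [ENNReal.ofReal_eq_zero]
          apply max_le _ le_rfl
          rw [sub_nonpos, Rprof, hMdef]
          apply Finset.sum_le_sum
          intro i _
          exact Set.indicator_le' (fun _ _ => le_rfl) (fun _ _ => (hp i).le) t
        simp_rw [this]
        simp
      have hEM : Etrans P M = 0 := le_antisymm (le_trans (hdom M hM0) hcapM.le) (zero_le)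
      rw [Etrans, lintegral_eq_zero_iff
        (show Measurable fun t => ENNReal.ofReal (max (P t - M) 0) from ((hPm.sub measurable_const).max measurable_const).ennreal_ofReal)] at hEM
      have : F M =ᵐ[volume.restrict (Ioi (0:ℝ))] 0 := by
        filter_upwards [hEM] with t ht
        simp only [Pi.zero_apply, ENNReal.ofReal_eq_zero] at ht
        have h1 : max (P t - M) 0 = 0 := le_antisymm ht (le_max_right _ _)
        simp only [hFdef, Pi.zero_apply]
        rw [max_eq_left hM0, h1]
        rw [min_eq_right hpl0.le]
      calc f M = ∫ t in Ioi (0:ℝ), F M t := rfl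
        _ = ∫ t in Ioi (0:ℝ), (0:ℝ) := integral_congr_ae this
        _ = 0 := integral_zero _ _
    -- select the threshold θ
    have hθsel : ∃ θ : ℝ, 0 ≤ θ ∧ f θ ≤ pl * xl ∧ (0 < θ → f θ = pl * xl) := by
      rcases le_or_gt (f 0) (pl * xl) with h | h
      · exact ⟨0, le_rfl, h, fun h0 => absurd h0 (lt_irrefl 0)⟩
      · have hsub := intermediate_value_Icc' hM0 hfc.continuousOn
        have hmem : pl * xl ∈ Icc (f M) (f 0) := by
          rw [hfM]
          exact ⟨by positivity, h.le⟩
        obtain ⟨θ, hθmem, hfθ⟩ := hsub hmem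
        exact ⟨θ, hθmem.1, hfθ.le, fun _ => hfθ⟩
    obtain ⟨θ, hθ0, hfθle, hfθcrit⟩ := hθsel
    -- the schedule of the last channel
    set v : ℝ → ℝ := fun t => min pl (max (P t - θ) 0) with hvdef
    have hvF : v = F θ := by
      funext t
      rw [hvdef, hFdef]
      simp only
      rw [max_eq_left hθ0]
    have hvm : Measurable v := by rw [hvF]; exact hFm θ
    have hvnn : ∀ t, 0 ≤ v t := by rw [hvF]; exact hFnn θ
    have hvle : ∀ t, v t ≤ pl := fun t => min_le_left _ _
    have hvint : IntegrableOn v (Ioi (0:ℝ)) volume := by rw [hvF]; exact hFint θ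
    have hvintegral : ∫ t in Ioi (0:ℝ), v t = f θ := by rw [hvF, hfdef]
    -- energy bound for the last channel
    have henergy_last : ∀ t : ℝ, 0 ≤ t → (∫ s in (0:ℝ)..t, v s) ≤ pl * xl := by
      intro t ht
      rw [intervalIntegral.integral_of_le ht]
      calc ∫ s in Ioc (0:ℝ) t, v s ≤ ∫ s in Ioi (0:ℝ), v s := by
            apply setIntegral_mono_set hvint (ae_of_all _ fun s => hvnn s)
            exact HasSubset.Subset.eventuallyLE Ioc_subset_Ioi_self
        _ = f θ := hvintegral
        _ ≤ pl * xl := hfθle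
    -- the remaining profile
    set P' : ℝ → ℝ := fun t => P t - v t with hP'def
    have hP'm : Measurable P' := hPm.sub hvm
    have hP'nn : ∀ t, 0 ≤ t → 0 ≤ P' t := by
      intro t ht
      have h1 : v t ≤ max (P t - θ) 0 := min_le_right _ _
      have h2 : max (P t - θ) 0 ≤ P t := max_le (by linarith) (hPnn t ht)
      simp only [hP'def]
      linarith
    -- domination for the reduced fleet
    have hdom' : ∀ p : ℝ, 0 ≤ p → Etrans P' p ≤ capacity n (Fin.init pbar) (Fin.init x) p := by
      intro p hpp
      rcases le_or_gt θ p with hθp | hpθ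
      · -- case θ ≤ p : E_{P'}(p) ≤ E_P(p + pl) ≤ Ω(p + pl) ≤ Ω'(p)
        have step1 : Etrans P' p ≤ Etrans P (p + pl) := by
          apply lintegral_mono
          intro t
          apply ENNReal.ofReal_le_ofReal
          simp only [hP'def, hvdef]
          apply max_le _ (le_max_right _ _)
          rcases le_total pl (max (P t - θ) 0) with h2 | h2
          · rw [min_eq_left h2]
            exact le_trans (by linarith) (le_max_left (P t - (p + pl)) 0)
          · rw [min_eq_right h2]
            have h3 := le_max_left (P t - θ) 0
            exact le_trans (by linarith) (le_max_right (P t - (p + pl)) 0)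
        have step2 : Etrans P (p + pl) ≤ capacity (n+1) pbar x (p + pl) :=
          hdom (p + pl) (by linarith)
        have step3 : capacity (n+1) pbar x (p + pl) ≤ capacity n (Fin.init pbar) (Fin.init x) p := by
          rw [capacity, capacity, Etrans, Etrans]
          apply lintegral_mono
          intro t
          apply ENNReal.ofReal_le_ofReal
          rw [Rprof_succ]
          have hind : (0:ℝ) ≤ (Ico (0:ℝ) xl).indicator (fun _ => pl) t ∧
              (Ico (0:ℝ) xl).indicator (fun _ => pl) t ≤ pl := by
            constructor
            · exact Set.indicator_nonneg (fun _ _ => hpl0.le) t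
            · exact Set.indicator_le' (fun _ _ => le_rfl) (fun _ _ => hpl0.le) t
          apply max_le _ (le_max_right _ _)
          have := le_max_left (Rprof n (Fin.init pbar) (Fin.init x) t - p) 0
          linarith [hind.1, hind.2]
        exact le_trans step1 (le_trans step2 step3)
      · -- case p < θ : cancellation argument
        have hθpos : 0 < θ := lt_of_le_of_lt hpp hpθ
        have hfeq : f θ = pl * xl := hfθcrit hθpos
        have hlint_v : ∫⁻ t in Ioi (0:ℝ), ENNReal.ofReal (v t) = ENNReal.ofReal (pl * xl) := by
          rw [← ofReal_integral_eq_lintegral_ofReal hvint (ae_of_all _ fun t => hvnn t)]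
          rw [hvintegral, hfeq]
        have key : Etrans P' p + ENNReal.ofReal (pl * xl) ≤ Etrans P p := by
          rw [← hlint_v, Etrans, Etrans]
          have hmeas1 : Measurable fun t : ℝ => ENNReal.ofReal (max (P' t - p) 0) :=
            ((hP'm.sub measurable_const).max measurable_const).ennreal_ofReal
          rw [← lintegral_add_left hmeas1]
          apply lintegral_mono
          intro t
          show ENNReal.ofReal (max (P' t - p) 0) + ENNReal.ofReal (v t)
            ≤ ENNReal.ofReal (max (P t - p) 0)
          rw [← ENNReal.ofReal_add (le_max_right _ _) (hvnn t)]
          apply ENNReal.ofReal_le_ofReal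
          simp only [hP'def, hvdef]
          rcases le_total (P t) θ with h | h
          · have hv0 : min pl (max (P t - θ) 0) = 0 := by
              rw [max_eq_right (by linarith), min_eq_right hpl0.le]
            rw [hv0]
            simp
          · have hvle' : min pl (max (P t - θ) 0) ≤ P t - θ := by
              rw [max_eq_left (by linarith)]
              exact min_le_right _ _
            have h1 : max (P t - min pl (max (P t - θ) 0) - p) 0
                = P t - min pl (max (P t - θ) 0) - p := by
              apply max_eq_left
              linarith
            have h2 : max (P t - p) 0 = P t - p := max_eq_left (by linarith)
            rw [h1, h2]
            ring_nf
            exact le_rfl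
        have cap_split : capacity (n+1) pbar x p
            ≤ capacity n (Fin.init pbar) (Fin.init x) p + ENNReal.ofReal (pl * xl) := by
          rw [ENNReal.ofReal_mul hpl0.le, ← lintegral_indicator_Ico pl xl hpl0.le,
            capacity, capacity, Etrans, Etrans]
          have hmeas2 : Measurable fun t : ℝ =>
              ENNReal.ofReal (max (Rprof n (Fin.init pbar) (Fin.init x) t - p) 0) :=
            (((measurable_Rprof n (Fin.init pbar) (Fin.init x)).sub
              measurable_const).max measurable_const).ennreal_ofReal
          rw [← lintegral_add_left hmeas2]
          apply lintegral_mono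
          intro t
          show ENNReal.ofReal (max (Rprof (n+1) pbar x t - p) 0)
            ≤ ENNReal.ofReal (max (Rprof n (Fin.init pbar) (Fin.init x) t - p) 0)
              + ENNReal.ofReal ((Ico (0:ℝ) xl).indicator (fun _ => pl) t)
          rw [← ENNReal.ofReal_add (le_max_right _ _)
            (Set.indicator_nonneg (fun _ _ => hpl0.le) t)]
          apply ENNReal.ofReal_le_ofReal
          rw [Rprof_succ]
          have hind : (0:ℝ) ≤ (Ico (0:ℝ) xl).indicator (fun _ => pl) t :=
            Set.indicator_nonneg (fun _ _ => hpl0.le) t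
          apply max_le
          · have := le_max_left (Rprof n (Fin.init pbar) (Fin.init x) t - p) 0
            linarith
          · have := le_max_right (Rprof n (Fin.init pbar) (Fin.init x) t - p) 0
            linarith
        have total : Etrans P' p + ENNReal.ofReal (pl * xl)
            ≤ capacity n (Fin.init pbar) (Fin.init x) p + ENNReal.ofReal (pl * xl) :=
          le_trans key (le_trans (hdom p hpp) cap_split)
        exact (ENNReal.add_le_add_iff_right ENNReal.ofReal_ne_top).mp total
    -- apply the induction hypothesis
    obtain ⟨u', hu'm, hu'ae, hu'energy⟩ := ih (Fin.init pbar) (Fin.init x)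
      (fun i => hp i.castSucc) (fun i => hx i.castSucc) P' hP'm hP'nn hdom'
    refine ⟨fun t => Fin.snoc (u' t) (v t), ?_, ?_, ?_⟩
    · apply measurable_pi_lambda
      intro i
      induction i using Fin.lastCases with
      | last => simpa [Fin.snoc_last] using hvm
      | cast i => simpa [Fin.snoc_castSucc] using (measurable_pi_iff.mp hu'm i)
    · filter_upwards [hu'ae] with t ht
      constructor
      · rw [Fin.sum_univ_castSucc]
        simp only [Fin.snoc_castSucc, Fin.snoc_last]
        rw [ht.1]
        simp [hP'def]
      · intro i
        induction i using Fin.lastCases with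
        | last => simpa [Fin.snoc_last] using ⟨hvnn t, hvle t⟩
        | cast i => simpa [Fin.snoc_castSucc, Fin.init] using ht.2 i
    · intro t ht i
      induction i using Fin.lastCases with
      | last =>
        simpa [Fin.snoc_last] using henergy_last t ht
      | cast i =>
        have := hu'energy t ht i
        simpa [Fin.snoc_castSucc, Fin.init] using this

/-- A request profile is feasible for the fleet iff its E-p transform is dominated
pointwise by the capacity curve of the fleet. -/
theorem feasible_iff_Etrans_le_capacity
    (n : ℕ) (hn : 1 ≤ n) (pbar x : Fin n → ℝ)
    (hp : ∀ i, 0 < pbar i) (hx : ∀ i, 0 ≤ x i)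
    (P : ℝ → ℝ) (hPm : Measurable P) (hPnn : ∀ t, 0 ≤ t → 0 ≤ P t) :
    Feasible n pbar x P ↔ ∀ p : ℝ, 0 ≤ p → Etrans P p ≤ capacity n pbar x p := by
  constructor
  · rintro ⟨u, hum, hae, hen⟩ p hpp
    have hrest : volume.restrict (Ioi (0:ℝ)) = volume.restrict (Ici (0:ℝ)) :=
      Measure.restrict_congr_set Ioi_ae_eq_Ici
    have hae' : ∀ᵐ t ∂(volume.restrict (Ioi (0:ℝ))),
        (∑ i, u t i) = P t ∧ ∀ i, 0 ≤ u t i ∧ u t i ≤ pbar i := by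
      rw [hrest]; exact hae
    have haeb : ∀ᵐ t ∂(volume.restrict (Ioi (0:ℝ))), ∀ i, 0 ≤ u t i ∧ u t i ≤ pbar i :=
      hae'.mono fun t ht => ht.2
    have henergy : ∀ i, ∫⁻ t in Ioi (0:ℝ), ENNReal.ofReal (u t i)
        ≤ ENNReal.ofReal (pbar i * x i) := by
      intro i
      exact energy_lintegral_bound (fun t => u t i) ((measurable_pi_apply i).comp hum)
        (pbar i) (pbar i * x i) (haeb.mono fun t ht => ht i) (fun t ht => hen t ht i)
    have hcongr : Etrans P p = ∫⁻ t in Ioi (0:ℝ), ENNReal.ofReal (max (∑ i, u t i - p) 0) := by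
      rw [Etrans]
      apply lintegral_congr_ae
      filter_upwards [hae'] with t ht
      rw [ht.1]
    rw [hcongr]
    exact forward_aux n pbar x hp hx u hum haeb henergy p hpp
  · intro hdom
    obtain ⟨u, hum, hae, hen⟩ := backward_aux n pbar x hp hx P hPm hPnn hdom
    refine ⟨u, hum, ?_, hen⟩
    rw [← Measure.restrict_congr_set Ioi_ae_eq_Ici]
    exact hae
end

section
/- (Necessity) If a request profile P is feasible for the fleet (p̄, x), then its E-p transform is dominated pointwise by the capacity curve: E_P(p) ≤ Ω_{p̄,x}(p) for all p ≥ 0. -/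
open MeasureTheory Set
open scoped ENNReal

lemma ofReal_max_zero' (z : ℝ) : ENNReal.ofReal (max z 0) = ENNReal.ofReal z := by
  rcases le_total z 0 with h | h
  · rw [max_eq_right h, ENNReal.ofReal_zero, ENNReal.ofReal_of_nonpos h]
  · rw [max_eq_left h]

lemma vol_inter_aux (a xv : ℝ) (ha : (0:ℝ) ≤ a) :
    volume (Ico (0:ℝ) xv ∩ Ioc 0 a) = ENNReal.ofReal (min a xv) := by
  rcases le_or_gt xv a with h | h
  · have hs : Ico (0:ℝ) xv ∩ Ioc 0 a = Ioo 0 xv := by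
      ext t
      simp only [mem_inter_iff, mem_Ico, mem_Ioc, mem_Ioo]
      constructor
      · rintro ⟨⟨_, h2⟩, h3, _⟩; exact ⟨h3, h2⟩
      · rintro ⟨h1, h2⟩; exact ⟨⟨h1.le, h2⟩, h1, h2.le.trans h⟩
    rw [hs, Real.volume_Ioo, min_eq_right h, sub_zero]
  · have hs : Ico (0:ℝ) xv ∩ Ioc 0 a = Ioc 0 a := by
      ext t
      simp only [mem_inter_iff, mem_Ico, mem_Ioc]
      constructor
      · rintro ⟨_, h3⟩; exact h3
      · rintro ⟨h1, h2⟩; exact ⟨⟨h1.le, lt_of_le_of_lt h2 h⟩, h1, h2⟩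
    rw [hs, Real.volume_Ioc, min_eq_left h.le, sub_zero]

lemma lint_R_aux (n : ℕ) (pbar x : Fin n → ℝ) (hp : ∀ i, 0 ≤ pbar i) (a : ℝ) (ha : 0 ≤ a) :
    ∫⁻ t in Ioc (0:ℝ) a, ENNReal.ofReal (Rprof n pbar x t) =
      ∑ i, ENNReal.ofReal (pbar i * min a (x i)) := by
  have h1 : ∀ t, ENNReal.ofReal (Rprof n pbar x t)
      = ∑ i, (Ico (0:ℝ) (x i)).indicator (fun _ => ENNReal.ofReal (pbar i)) t := by
    intro t
    rw [Rprof, ENNReal.ofReal_sum_of_nonneg (fun i _ => indicator_nonneg (fun _ _ => hp i) t)]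
    refine Finset.sum_congr rfl fun i _ => ?_
    by_cases ht : t ∈ Ico (0:ℝ) (x i)
    · simp [indicator_of_mem ht]
    · simp [indicator_of_notMem ht]
  simp_rw [h1]
  rw [lintegral_finset_sum _ (fun i _ => measurable_const.indicator measurableSet_Ico)]
  refine Finset.sum_congr rfl fun i _ => ?_
  rw [lintegral_indicator measurableSet_Ico, setLIntegral_const,
    Measure.restrict_apply measurableSet_Ico, vol_inter_aux a (x i) ha,
    ← ENNReal.ofReal_mul (hp i)]

/-- Necessity: if a request profile is feasible for the fleet, then its E-p transform
is dominated pointwise by the capacity curve. -/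
theorem Etrans_le_capacity_of_feasible
    (n : ℕ) (hn : 1 ≤ n) (pbar x : Fin n → ℝ)
    (hp : ∀ i, 0 < pbar i) (hx : ∀ i, 0 ≤ x i)
    (P : ℝ → ℝ) (hPm : Measurable P) (hPnn : ∀ t, 0 ≤ t → 0 ≤ P t)
    (hfeas : Feasible n pbar x P) :
    ∀ p : ℝ, 0 ≤ p → Etrans P p ≤ capacity n pbar x p := by
  intro p hp0
  obtain ⟨u, hum, hae, hint⟩ := hfeas
  have hui : ∀ i, Measurable fun t => u t i := fun i => (measurable_pi_apply i).comp hum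
  have haes : ∀ (s : Set ℝ), s ⊆ Ici (0:ℝ) →
      (∀ᵐ t ∂(volume.restrict s),
        (∑ i, u t i) = P t ∧ ∀ i, 0 ≤ u t i ∧ u t i ≤ pbar i) :=
    fun s hs => ae_restrict_of_ae_restrict_of_subset hs hae
  -- L1: total energy drawn from battery i is at most pbar i * x i
  have hL1 : ∀ i, ∫⁻ t in Ioi (0:ℝ), ENNReal.ofReal (u t i) ≤ ENNReal.ofReal (pbar i * x i) := by
    intro i
    have hstep : ∀ N : ℕ, ∫⁻ t in Ioc (0:ℝ) (N:ℝ), ENNReal.ofReal (u t i)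
        ≤ ENNReal.ofReal (pbar i * x i) := by
      intro N
      have hsub : Ioc (0:ℝ) (N:ℝ) ⊆ Ici 0 := fun t ht => ht.1.le
      have hb : ∀ᵐ t ∂(volume.restrict (Ioc (0:ℝ) (N:ℝ))), 0 ≤ u t i ∧ u t i ≤ pbar i :=
        (haes _ hsub).mono fun t ht => ht.2 i
      have hInt : IntegrableOn (fun t => u t i) (Ioc (0:ℝ) (N:ℝ)) := by
        refine Integrable.mono' (integrable_const (pbar i)) (hui i).aestronglyMeasurable ?_
        refine hb.mono fun t ht => ?_
        rw [Real.norm_eq_abs, abs_le]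
        exact ⟨le_trans (neg_nonpos_of_nonneg (hp i).le) ht.1, ht.2⟩
      have heq : ∫⁻ t in Ioc (0:ℝ) (N:ℝ), ENNReal.ofReal (u t i)
          = ENNReal.ofReal (∫ t in Ioc (0:ℝ) (N:ℝ), u t i) :=
        (ofReal_integral_eq_lintegral_ofReal hInt (hb.mono fun t ht => ht.1)).symm
      rw [heq, ← intervalIntegral.integral_of_le (by positivity : (0:ℝ) ≤ (N:ℝ))]
      exact ENNReal.ofReal_le_ofReal (hint N (by positivity) i)
    set f : ℝ → ℝ≥0∞ := fun t => ENNReal.ofReal (u t i) with hf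
    have hfm : Measurable f := (hui i).ennreal_ofReal
    set F : ℕ → ℝ → ℝ≥0∞ := fun N t => (Ioc (0:ℝ) (N:ℝ)).indicator f t with hF
    have hFm : ∀ N, Measurable (F N) := fun N => hfm.indicator measurableSet_Ioc
    have hFmono : Monotone F := fun m k hmk =>
      indicator_le_indicator_of_subset
        (Ioc_subset_Ioc_right (by exact_mod_cast hmk)) (fun _ => zero_le)
    have hkey : (Ioi (0:ℝ)).indicator f = fun t => ⨆ N, F N t := by
      funext t
      by_cases ht : 0 < t
      · have hIeq : (Ioi (0:ℝ)).indicator f t = f t := indicator_of_mem ht f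
        rw [hIeq]
        refine le_antisymm ?_ (iSup_le fun N => indicator_le_self' (fun _ _ => zero_le) t)
        obtain ⟨N, hN⟩ := exists_nat_ge t
        have hmem : t ∈ Ioc (0:ℝ) (N:ℝ) := ⟨ht, hN⟩
        have : F N t = f t := indicator_of_mem hmem f
        rw [← this]
        exact le_iSup (fun N => F N t) N
      · have h1 : (Ioi (0:ℝ)).indicator f t = 0 := indicator_of_notMem ht f
        have h2 : ∀ N, F N t = 0 := fun N =>
          indicator_of_notMem (fun hc => ht hc.1) f
        simp [h1, h2]
    calc ∫⁻ t in Ioi (0:ℝ), f t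
        = ∫⁻ t, (Ioi (0:ℝ)).indicator f t := (lintegral_indicator measurableSet_Ioi f).symm
      _ = ∫⁻ t, ⨆ N, F N t := by rw [hkey]
      _ = ⨆ N, ∫⁻ t, F N t := lintegral_iSup hFm hFmono
      _ = ⨆ N : ℕ, ∫⁻ t in Ioc (0:ℝ) (N:ℝ), f t := by
          refine iSup_congr fun N => ?_
          exact lintegral_indicator measurableSet_Ioc f
      _ ≤ ENNReal.ofReal (pbar i * x i) := iSup_le hstep
  -- sum decomposition of P
  have hPsum : ∀ (s : Set ℝ), s ⊆ Ici (0:ℝ) →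
      ∫⁻ t in s, ENNReal.ofReal (P t) = ∑ i, ∫⁻ t in s, ENNReal.ofReal (u t i) := by
    intro s hs
    rw [← lintegral_finset_sum _ (fun i _ => (hui i).ennreal_ofReal)]
    refine lintegral_congr_ae ((haes s hs).mono fun t ht => ?_)
    dsimp only
    rw [← ht.1, ENNReal.ofReal_sum_of_nonneg (fun i _ => (ht.2 i).1)]
  have hfin : ∑ i, ENNReal.ofReal (pbar i * x i) ≠ ∞ :=
    ENNReal.sum_ne_top.mpr fun i _ => ENNReal.ofReal_ne_top
  rcases eq_or_lt_of_le hp0 with hp0' | hp0'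
  · -- case p = 0
    obtain rfl : p = 0 := hp0'.symm
    have hE : Etrans P 0 = ∫⁻ t in Ioi (0:ℝ), ENNReal.ofReal (P t) := by
      simp only [Etrans, sub_zero, ofReal_max_zero']
    haveI : Nonempty (Fin n) := ⟨⟨0, hn⟩⟩
    set a0 : ℝ := Finset.univ.sup' Finset.univ_nonempty x with ha0def
    have hle : ∀ i, x i ≤ a0 := fun i => Finset.le_sup' x (Finset.mem_univ i)
    have ha0 : 0 ≤ a0 := le_trans (hx ⟨0, hn⟩) (hle ⟨0, hn⟩)
    have hcap : ∑ i, ENNReal.ofReal (pbar i * x i) ≤ capacity n pbar x 0 := by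
      have h1 : ∫⁻ t in Ioc (0:ℝ) a0, ENNReal.ofReal (Rprof n pbar x t)
          = ∑ i, ENNReal.ofReal (pbar i * x i) := by
        rw [lint_R_aux n pbar x (fun i => (hp i).le) a0 ha0]
        exact Finset.sum_congr rfl fun i _ => by rw [min_eq_right (hle i)]
      calc ∑ i, ENNReal.ofReal (pbar i * x i)
          = ∫⁻ t in Ioc (0:ℝ) a0, ENNReal.ofReal (Rprof n pbar x t) := h1.symm
        _ ≤ ∫⁻ t in Ioi (0:ℝ), ENNReal.ofReal (Rprof n pbar x t) :=
            lintegral_mono_set Ioc_subset_Ioi_self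
        _ = capacity n pbar x 0 := by simp only [capacity, Etrans, sub_zero, ofReal_max_zero']
    rw [hE, hPsum (Ioi 0) Ioi_subset_Ici_self]
    exact le_trans (Finset.sum_le_sum fun i _ => hL1 i) hcap
  · -- case 0 < p
    set A : Set ℝ := Ioi (0:ℝ) ∩ {t | p < P t} with hAdef
    have hAm : MeasurableSet A :=
      measurableSet_Ioi.inter (measurableSet_lt measurable_const hPm)
    have hAsub : A ⊆ Ioi (0:ℝ) := fun t ht => ht.1
    have hAsub' : A ⊆ Ici (0:ℝ) := fun t ht => mem_Ici.mpr (le_of_lt (mem_Ioi.mp ht.1))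
    have hEA : Etrans P p = ∫⁻ t in A, (ENNReal.ofReal (P t) - ENNReal.ofReal p) := by
      have h0 : ∀ t, ENNReal.ofReal (max (P t - p) 0)
          = ENNReal.ofReal (P t) - ENNReal.ofReal p := fun t => by
        rw [ofReal_max_zero', ENNReal.ofReal_sub _ hp0]
      rw [Etrans]
      simp_rw [h0]
      have h1 : ∫⁻ t in Ioi (0:ℝ), (ENNReal.ofReal (P t) - ENNReal.ofReal p)
          = ∫⁻ t in Ioi (0:ℝ),
              A.indicator (fun r => ENNReal.ofReal (P r) - ENNReal.ofReal p) t := by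
        refine setLIntegral_congr_fun measurableSet_Ioi (fun t ht => ?_)
        by_cases htA : p < P t
        · have htA' : t ∈ A := ⟨ht, htA⟩
          exact (indicator_of_mem htA'
            (fun r => ENNReal.ofReal (P r) - ENNReal.ofReal p)).symm
        · have htA' : t ∉ A := fun hc => htA hc.2
          rw [tsub_eq_zero_of_le (ENNReal.ofReal_le_ofReal (not_lt.mp htA))]
          exact (indicator_of_notMem htA'
            (fun r => ENNReal.ofReal (P r) - ENNReal.ofReal p)).symm
      rw [h1, lintegral_indicator hAm, Measure.restrict_restrict hAm,
        inter_eq_left.mpr hAsub]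
    have hub : ∫⁻ t in A, ENNReal.ofReal (P t) ≤ ∑ i, ENNReal.ofReal (pbar i * x i) := by
      rw [hPsum A hAsub']
      exact Finset.sum_le_sum fun i _ =>
        le_trans (lintegral_mono_set hAsub) (hL1 i)
    have hμA : volume A ≠ ∞ := by
      intro hcon
      have h1 : ENNReal.ofReal p * volume A ≤ ∫⁻ t in A, ENNReal.ofReal (P t) := by
        rw [← setLIntegral_const A (ENNReal.ofReal p)]
        exact setLIntegral_mono hPm.ennreal_ofReal
          (fun t ht => ENNReal.ofReal_le_ofReal ht.2.le)
      rw [hcon, ENNReal.mul_top (ne_of_gt (ENNReal.ofReal_pos.mpr hp0'))] at h1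
      exact hfin (top_le_iff.mp (le_trans h1 hub))
    set a : ℝ := (volume A).toReal with hadef
    have ha : 0 ≤ a := ENNReal.toReal_nonneg
    have hvA : volume A = ENNReal.ofReal a := (ENNReal.ofReal_toReal hμA).symm
    -- exact decomposition of the E-transform over A
    have hdec : ∫⁻ t in A, (ENNReal.ofReal (P t) - ENNReal.ofReal p)
        = (∫⁻ t in A, ENNReal.ofReal (P t)) - ENNReal.ofReal p * volume A := by
      refine ENNReal.eq_sub_of_add_eq (ENNReal.mul_ne_top ENNReal.ofReal_ne_top hμA) ?_
      rw [← setLIntegral_const A (ENNReal.ofReal p),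
        ← lintegral_add_right _ measurable_const]
      refine setLIntegral_congr_fun hAm (fun t ht => ?_)
      exact tsub_add_cancel_of_le (ENNReal.ofReal_le_ofReal ht.2.le)
    -- per-battery bound by the min
    have hAi : ∀ i, ∫⁻ t in A, ENNReal.ofReal (u t i)
        ≤ ENNReal.ofReal (pbar i * min a (x i)) := by
      intro i
      have h1 : ∫⁻ t in A, ENNReal.ofReal (u t i) ≤ ENNReal.ofReal (pbar i) * volume A := by
        have hb : ∀ᵐ t ∂(volume.restrict A),
            ENNReal.ofReal (u t i) ≤ ENNReal.ofReal (pbar i) :=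
          (haes A hAsub').mono fun t ht => ENNReal.ofReal_le_ofReal (ht.2 i).2
        calc ∫⁻ t in A, ENNReal.ofReal (u t i)
            ≤ ∫⁻ _ in A, ENNReal.ofReal (pbar i) := lintegral_mono_ae hb
          _ = ENNReal.ofReal (pbar i) * volume A := setLIntegral_const _ _
      have h2 : ∫⁻ t in A, ENNReal.ofReal (u t i) ≤ ENNReal.ofReal (pbar i * x i) :=
        le_trans (lintegral_mono_set hAsub) (hL1 i)
      have hmono : Monotone ENNReal.ofReal := fun _ _ h => ENNReal.ofReal_le_ofReal h
      have h3 : ENNReal.ofReal (pbar i * min a (x i))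
          = min (ENNReal.ofReal (pbar i) * ENNReal.ofReal a) (ENNReal.ofReal (pbar i * x i)) := by
        rw [mul_min_of_nonneg _ _ (hp i).le, hmono.map_min, ENNReal.ofReal_mul (hp i).le]
      rw [h3]
      exact le_min (hvA ▸ h1) h2
    have hEub : Etrans P p ≤
        (∑ i, ENNReal.ofReal (pbar i * min a (x i))) - ENNReal.ofReal p * ENNReal.ofReal a := by
      rw [hEA, hdec, hvA]
      refine tsub_le_tsub_right ?_ _
      rw [hPsum A hAsub']
      exact Finset.sum_le_sum fun i _ => hAi i
    have hcap : (∑ i, ENNReal.ofReal (pbar i * min a (x i)))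
        - ENNReal.ofReal p * ENNReal.ofReal a ≤ capacity n pbar x p := by
      have hR : ∫⁻ t in Ioc (0:ℝ) a, ENNReal.ofReal (Rprof n pbar x t)
          = ∑ i, ENNReal.ofReal (pbar i * min a (x i)) :=
        lint_R_aux n pbar x (fun i => (hp i).le) a ha
      have hvol : volume (Ioc (0:ℝ) a) = ENNReal.ofReal a := by
        rw [Real.volume_Ioc, sub_zero]
      have hstep : (∑ i, ENNReal.ofReal (pbar i * min a (x i)))
          - ENNReal.ofReal p * ENNReal.ofReal a
          ≤ ∫⁻ t in Ioc (0:ℝ) a, (ENNReal.ofReal (Rprof n pbar x t) - ENNReal.ofReal p) := by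
        rw [← hR, ← hvol, tsub_le_iff_right]
        calc ∫⁻ t in Ioc (0:ℝ) a, ENNReal.ofReal (Rprof n pbar x t)
            ≤ ∫⁻ t in Ioc (0:ℝ) a,
                ((ENNReal.ofReal (Rprof n pbar x t) - ENNReal.ofReal p) + ENNReal.ofReal p) :=
              lintegral_mono fun t => le_tsub_add
          _ = (∫⁻ t in Ioc (0:ℝ) a, (ENNReal.ofReal (Rprof n pbar x t) - ENNReal.ofReal p))
                + ENNReal.ofReal p * volume (Ioc (0:ℝ) a) := by
              rw [lintegral_add_right _ measurable_const, setLIntegral_const]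
      calc (∑ i, ENNReal.ofReal (pbar i * min a (x i)))
            - ENNReal.ofReal p * ENNReal.ofReal a
          ≤ ∫⁻ t in Ioc (0:ℝ) a, (ENNReal.ofReal (Rprof n pbar x t) - ENNReal.ofReal p) := hstep
        _ = ∫⁻ t in Ioc (0:ℝ) a, ENNReal.ofReal (max (Rprof n pbar x t - p) 0) := by
            refine lintegral_congr fun t => ?_
            rw [ofReal_max_zero', ENNReal.ofReal_sub _ hp0]
        _ ≤ ∫⁻ t in Ioi (0:ℝ), ENNReal.ofReal (max (Rprof n pbar x t - p) 0) :=
            lintegral_mono_set Ioc_subset_Ioi_self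
        _ = capacity n pbar x p := rfl
    exact le_trans hEub hcap
end

section
/- (Sufficiency) If a request profile P satisfies E_P(p) ≤ Ω_{p̄,x}(p) for all p ≥ 0, then P is feasible for the fleet (p̄, x), i.e. P ∈ F_{p̄,x}. -/
open MeasureTheory Set
open scoped ENNReal

namespace FeasAux

lemma ofReal_max_zero (y : ℝ) : ENNReal.ofReal (max y 0) = ENNReal.ofReal y := by
  rcases le_total y 0 with h | h
  · rw [max_eq_right h, ENNReal.ofReal_zero, eq_comm, ENNReal.ofReal_eq_zero]
    exact h
  · rw [max_eq_left h]

/-- Abstract capacity curve for a fleet indexed by `ι`. -/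
noncomputable def OmA {ι : Type} [Fintype ι] (pbar x : ι → ℝ) (p : ℝ) : ℝ≥0∞ :=
  ∫⁻ t in Ioi (0 : ℝ),
    ENNReal.ofReal ((∑ i, Set.indicator (Ico (0 : ℝ) (x i)) (fun _ => pbar i) t) - p)

lemma lint_band (pj xj : ℝ) (hpj : 0 ≤ pj) :
    ∫⁻ t in Ioi (0 : ℝ), ((Ico (0 : ℝ) xj).indicator (fun _ => ENNReal.ofReal pj) t)
      = ENNReal.ofReal (pj * xj) := by
  rw [lintegral_indicator measurableSet_Ico, setLIntegral_const,
    Measure.restrict_apply measurableSet_Ico]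
  have h1 : Ico (0 : ℝ) xj ∩ Ioi 0 = Ioo 0 xj := by
    ext t
    simp only [mem_inter_iff, mem_Ico, mem_Ioi, mem_Ioo]
    constructor
    · rintro ⟨⟨_, h2⟩, h3⟩; exact ⟨h3, h2⟩
    · rintro ⟨h1, h2⟩; exact ⟨⟨h1.le, h2⟩, h1⟩
  rw [h1, Real.volume_Ioo, sub_zero, ← ENNReal.ofReal_mul hpj]

lemma slice_swap (P : ℝ → ℝ) (hP : Measurable P) (A : Set ℝ) (hA : MeasurableSet A) :
    ∫⁻ t in Ioi (0 : ℝ), volume (A ∩ Iio (P t))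
      = ∫⁻ q in A, volume ({t | q < P t} ∩ Ioi 0) := by
  have hmeas : MeasurableSet {z : ℝ × ℝ | z.2 ∈ A ∧ z.2 < P z.1} := by
    apply MeasurableSet.inter
    · exact measurable_snd hA
    · exact measurableSet_lt measurable_snd (hP.comp measurable_fst)
  have h1 : ∀ t, volume (A ∩ Iio (P t))
      = ∫⁻ q, Set.indicator {z : ℝ × ℝ | z.2 ∈ A ∧ z.2 < P z.1} (fun _ => (1 : ℝ≥0∞)) (t, q) := by
    intro t
    rw [← lintegral_indicator_one (hA.inter measurableSet_Iio)]
    apply lintegral_congr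
    intro q
    by_cases hq : q ∈ A ∩ Iio (P t)
    · rw [Set.indicator_of_mem hq, Set.indicator_of_mem (by exact ⟨hq.1, hq.2⟩)]
      rfl
    · rw [Set.indicator_of_notMem hq, Set.indicator_of_notMem
        (by intro hh; exact hq ⟨hh.1, hh.2⟩)]
  calc ∫⁻ t in Ioi (0 : ℝ), volume (A ∩ Iio (P t))
      = ∫⁻ t in Ioi (0 : ℝ), ∫⁻ q,
          Set.indicator {z : ℝ × ℝ | z.2 ∈ A ∧ z.2 < P z.1} (fun _ => (1 : ℝ≥0∞)) (t, q) := by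
        exact lintegral_congr h1
    _ = ∫⁻ q, ∫⁻ t in Ioi (0 : ℝ),
          Set.indicator {z : ℝ × ℝ | z.2 ∈ A ∧ z.2 < P z.1} (fun _ => (1 : ℝ≥0∞)) (t, q) := by
        exact lintegral_lintegral_swap ((measurable_const.indicator hmeas).aemeasurable)
    _ = ∫⁻ q, A.indicator (fun q' => volume ({t | q' < P t} ∩ Ioi 0)) q := by
        apply lintegral_congr
        intro q
        by_cases hq : q ∈ A
        · rw [Set.indicator_of_mem hq]
          have h2 : ∀ t, Set.indicator {z : ℝ × ℝ | z.2 ∈ A ∧ z.2 < P z.1}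
              (fun _ => (1 : ℝ≥0∞)) (t, q) = Set.indicator {t | q < P t} (fun _ => (1 : ℝ≥0∞)) t := by
            intro t
            by_cases ht : q < P t
            · rw [Set.indicator_of_mem (by exact ⟨hq, ht⟩), Set.indicator_of_mem (by exact ht)]
            · rw [Set.indicator_of_notMem (by intro hh; exact ht hh.2),
                Set.indicator_of_notMem (by exact ht)]
          rw [lintegral_congr h2, lintegral_indicator (measurableSet_lt measurable_const hP),
            setLIntegral_one, Measure.restrict_apply (measurableSet_lt measurable_const hP)]
        · rw [Set.indicator_of_notMem hq]
          have h2 : ∀ t, Set.indicator {z : ℝ × ℝ | z.2 ∈ A ∧ z.2 < P z.1}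
              (fun _ => (1 : ℝ≥0∞)) (t, q) = 0 := by
            intro t
            exact Set.indicator_of_notMem (by intro hh; exact hq hh.1) _
          rw [lintegral_congr h2, lintegral_zero]
    _ = ∫⁻ q in A, volume ({t | q < P t} ∩ Ioi 0) := by
        exact lintegral_indicator hA _

lemma core (N : ℕ) : ∀ (ι : Type) [Fintype ι], Fintype.card ι = N →
    ∀ (pbar x : ι → ℝ), (∀ i, 0 < pbar i) → (∀ i, 0 ≤ x i) →
    ∀ (μ : ℝ → ℝ≥0∞), Measurable μ →
    (∀ p : ℝ, 0 ≤ p → ∫⁻ q in Ioi p, μ q ≤ OmA pbar x p) →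
    ∃ S : ι → Set ℝ, (∀ i, MeasurableSet (S i)) ∧ Pairwise (Function.onFun Disjoint S) ∧
      (⋃ i, S i) = Ico 0 (∑ i, pbar i) ∧
      (∀ i, volume (S i) = ENNReal.ofReal (pbar i)) ∧
      (∀ i, ∫⁻ q in S i, μ q ≤ ENNReal.ofReal (pbar i * x i)) := by
  induction N with
  | zero =>
    intro ι inst hcard pbar x hp hx μ hμ hdom
    haveI : IsEmpty ι := Fintype.card_eq_zero_iff.mp hcard
    refine ⟨fun _ => ∅, fun i => isEmptyElim i, fun i => isEmptyElim i, ?_,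
      fun i => isEmptyElim i, fun i => isEmptyElim i⟩
    simp [Finset.univ_eq_empty, Ico_self]
  | succ N IH =>
    intro ι inst hcard pbar x hp hx μ hμ hdom
    classical
    have hne : Nonempty ι := Fintype.card_pos_iff.mp (by rw [hcard]; exact Nat.succ_pos N)
    obtain ⟨j⟩ := hne
    set d : ℝ := pbar j with hd_def
    have hd : 0 < d := hp j
    set T : ℝ := ∑ i, pbar i with hT_def
    set c : ℝ := ∑ i ∈ Finset.univ.erase j, pbar i with hc_def
    have hcT : c + d = T := Finset.sum_erase_add _ _ (Finset.mem_univ j)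
    have hc0 : 0 ≤ c := Finset.sum_nonneg fun i _ => (hp i).le
    set ind : ι → ℝ → ℝ := fun i t => Set.indicator (Ico (0 : ℝ) (x i)) (fun _ => pbar i) t
      with hind_def
    set R : ℝ → ℝ := fun t => ∑ i, ind i t with hR_def
    set R' : ℝ → ℝ := fun t => ∑ i ∈ Finset.univ.erase j, ind i t with hR'_def
    have hind_nn : ∀ i t, 0 ≤ ind i t := by
      intro i t
      by_cases h : t ∈ Ico (0 : ℝ) (x i) <;>
        simp [hind_def, Set.indicator_of_mem, Set.indicator_of_notMem, h, (hp i).le]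
    have hind_le : ∀ i t, ind i t ≤ pbar i := by
      intro i t
      by_cases h : t ∈ Ico (0 : ℝ) (x i) <;>
        simp [hind_def, Set.indicator_of_mem, Set.indicator_of_notMem, h, (hp i).le]
    have hRsplit : ∀ t, R t = R' t + ind j t :=
      fun t => (Finset.sum_erase_add _ _ (Finset.mem_univ j)).symm
    have hR'le : ∀ t, R' t ≤ c := fun t => Finset.sum_le_sum fun i _ => hind_le i t
    have hRleT : ∀ t, R t ≤ T := fun t => Finset.sum_le_sum fun i _ => hind_le i t
    have hOmA_eq : ∀ p, OmA pbar x p = ∫⁻ t in Ioi (0 : ℝ), ENNReal.ofReal (R t - p) :=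
      fun p => rfl
    set Om' : ℝ → ℝ≥0∞ := fun p => ∫⁻ t in Ioi (0 : ℝ), ENNReal.ofReal (R' t - p) with hOm'_def
    have hOmA'_eq : ∀ p, OmA (fun i : {i : ι // i ≠ j} => pbar i.1) (fun i => x i.1) p = Om' p := by
      intro p
      unfold OmA
      rw [hOm'_def]
      apply lintegral_congr
      intro t
      congr 2
      exact (Finset.sum_subtype (Finset.univ.erase j)
        (fun i => by simp [Finset.mem_erase]) (fun i => ind i t)).symm
    set β : ℝ≥0∞ := ENNReal.ofReal (d * x j) with hβ_def
    have hβ_ne : β ≠ ⊤ := ENNReal.ofReal_ne_top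
    have hband : ∫⁻ t in Ioi (0 : ℝ),
        ((Ico (0 : ℝ) (x j)).indicator (fun _ => ENNReal.ofReal d) t) = β :=
      lint_band d (x j) hd.le
    have hOm_c : OmA pbar x c ≤ β := by
      rw [hOmA_eq]
      calc ∫⁻ t in Ioi (0 : ℝ), ENNReal.ofReal (R t - c)
          ≤ ∫⁻ t in Ioi (0 : ℝ), ((Ico (0 : ℝ) (x j)).indicator (fun _ => ENNReal.ofReal d) t) := by
            apply lintegral_mono
            intro t
            by_cases ht : t ∈ Ico (0 : ℝ) (x j)
            · rw [Set.indicator_of_mem ht]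
              exact ENNReal.ofReal_le_ofReal (by have := hRleT t; linarith)
            · rw [Set.indicator_of_notMem ht]
              have h3 : ind j t = 0 := by rw [hind_def]; exact Set.indicator_of_notMem ht _
              have h4 := hR'le t
              have h5 := hRsplit t
              exact le_of_eq (ENNReal.ofReal_eq_zero.mpr (by linarith))
        _ = β := hband
    have hOm_shift : ∀ p, OmA pbar x (p + d) ≤ Om' p := by
      intro p
      rw [hOmA_eq, hOm'_def]
      apply lintegral_mono
      intro t
      apply ENNReal.ofReal_le_ofReal
      have h1 : ind j t ≤ d := hind_le j t
      have h2 := hRsplit t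
      linarith
    have hOm_sub : ∀ p, OmA pbar x p ≤ Om' p + β := by
      intro p
      rw [hOmA_eq]
      have h1 : ∀ t, ENNReal.ofReal (R t - p) ≤ ENNReal.ofReal (R' t - p)
          + (Ico (0 : ℝ) (x j)).indicator (fun _ => ENNReal.ofReal d) t := by
        intro t
        by_cases ht : t ∈ Ico (0 : ℝ) (x j)
        · have h3 : ind j t = d := by rw [hind_def]; exact Set.indicator_of_mem ht _
          have h2 : R t - p = (R' t - p) + d := by have := hRsplit t; linarith
          rw [h2, Set.indicator_of_mem ht]
          exact ENNReal.ofReal_add_le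
        · have h3 : ind j t = 0 := by rw [hind_def]; exact Set.indicator_of_notMem ht _
          have h2 : R t = R' t := by have := hRsplit t; linarith
          rw [h2, Set.indicator_of_notMem ht]
          rw [add_zero]
      calc ∫⁻ t in Ioi (0 : ℝ), ENNReal.ofReal (R t - p)
          ≤ ∫⁻ t in Ioi (0 : ℝ), (ENNReal.ofReal (R' t - p)
              + (Ico (0 : ℝ) (x j)).indicator (fun _ => ENNReal.ofReal d) t) := lintegral_mono h1
        _ = Om' p + β := by
            rw [lintegral_add_right _ (measurable_const.indicator measurableSet_Ico), hband,
              hOm'_def]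
    have hOm0 : OmA pbar x 0 ≤ ∑ i, ENNReal.ofReal (pbar i * x i) := by
      rw [hOmA_eq]
      calc ∫⁻ t in Ioi (0 : ℝ), ENNReal.ofReal (R t - 0)
          ≤ ∫⁻ t in Ioi (0 : ℝ),
              ∑ i, ((Ico (0 : ℝ) (x i)).indicator (fun _ => ENNReal.ofReal (pbar i)) t) := by
            apply lintegral_mono
            intro t
            dsimp only
            rw [sub_zero]
            calc ENNReal.ofReal (R t) = ∑ i, ENNReal.ofReal (ind i t) := by
                  rw [hR_def]
                  exact ENNReal.ofReal_sum_of_nonneg (fun i _ => hind_nn i t)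
              _ ≤ ∑ i, ((Ico (0 : ℝ) (x i)).indicator (fun _ => ENNReal.ofReal (pbar i)) t) := by
                  apply Finset.sum_le_sum
                  intro i _
                  by_cases h : t ∈ Ico (0 : ℝ) (x i)
                  · rw [Set.indicator_of_mem h]
                    apply ENNReal.ofReal_le_ofReal
                    exact hind_le i t
                  · rw [Set.indicator_of_notMem h]
                    have h3 : ind i t = 0 := by rw [hind_def]; exact Set.indicator_of_notMem h _
                    rw [h3]
                    simp
        _ = ∑ i, ENNReal.ofReal (pbar i * x i) := by
            rw [lintegral_finset_sum _ (fun i _ => measurable_const.indicator measurableSet_Ico)]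
            exact Finset.sum_congr rfl fun i _ => lint_band (pbar i) (x i) (hp i).le
    have hsum_ne : (∑ i, ENNReal.ofReal (pbar i * x i)) ≠ ⊤ :=
      (ENNReal.sum_lt_top.mpr fun i _ => ENNReal.ofReal_lt_top).ne
    have hOmfin : OmA pbar x 0 ≠ ⊤ := ne_top_of_le_ne_top hsum_ne hOm0
    have hμtot : ∫⁻ q in Ioi (0 : ℝ), μ q ≠ ⊤ := ne_top_of_le_ne_top hOmfin (hdom 0 le_rfl)
    have hIcc_fin : ∫⁻ q in Icc (0 : ℝ) T, μ q ≠ ⊤ := by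
      have h1 : ∫⁻ q in Icc (0 : ℝ) T, μ q = ∫⁻ q in Ioc (0 : ℝ) T, μ q :=
        (setLIntegral_congr Ioc_ae_eq_Icc).symm
      rw [h1]
      exact ne_top_of_le_ne_top hμtot (lintegral_mono_set (fun q hq => hq.1))
    set G : ℝ → ℝ≥0∞ := fun b => ∫⁻ q in Ico b (b + d), μ q with hG_def
    have hG_le : ∀ b, 0 ≤ b → b ≤ c → G b ≤ ∫⁻ q in Icc (0 : ℝ) T, μ q := by
      intro b hb hbc
      exact lintegral_mono_set (fun q hq => ⟨hb.trans hq.1, le_trans (le_of_lt hq.2) (by linarith)⟩)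
    have hGfin : ∀ b, 0 ≤ b → b ≤ c → G b ≠ ⊤ :=
      fun b hb hbc => ne_top_of_le_ne_top hIcc_fin (hG_le b hb hbc)
    have hGcont : ContinuousOn (fun b => (G b).toReal) (Icc 0 c) := by
      intro b₀ hb₀
      have key : Filter.Tendsto G (nhdsWithin b₀ (Icc 0 c)) (nhds (G b₀)) := by
        have hrw : ∀ b, G b = ∫⁻ q, (Ico b (b + d)).indicator μ q := by
          intro b
          rw [hG_def, lintegral_indicator measurableSet_Ico]
        have h2 : Filter.Tendsto (fun b => ∫⁻ q, (Ico b (b + d)).indicator μ q)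
            (nhdsWithin b₀ (Icc 0 c)) (nhds (∫⁻ q, (Ico b₀ (b₀ + d)).indicator μ q)) := by
          apply tendsto_lintegral_filter_of_dominated_convergence ((Icc (0 : ℝ) T).indicator μ)
          · exact Filter.Eventually.of_forall (fun b => hμ.indicator measurableSet_Ico)
          · filter_upwards [self_mem_nhdsWithin] with b hb
            apply Filter.Eventually.of_forall
            intro q
            apply Set.indicator_le_indicator_of_subset
            · intro y hy
              exact ⟨hb.1.trans hy.1, (le_of_lt hy.2).trans (by linarith [hb.2])⟩
            · intro y; exact zero_le
          · rw [lintegral_indicator measurableSet_Icc]; exact hIcc_fin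
          · have hnull : ∀ᵐ (q : ℝ), q ∉ ({b₀, b₀ + d} : Set ℝ) := by
              apply measure_eq_zero_iff_ae_notMem.mp
              exact Set.Countable.measure_zero ((Set.countable_singleton _).insert _) _
            filter_upwards [hnull] with q hq
            have hq1 : q ≠ b₀ := fun h => hq (by rw [h]; exact Set.mem_insert _ _)
            have hq2 : q ≠ b₀ + d := fun h => hq (by rw [h]; exact Set.mem_insert_of_mem _ rfl)
            have hconst : ∀ᶠ b in nhdsWithin b₀ (Icc 0 c),
                (Ico b (b + d)).indicator μ q = (Ico b₀ (b₀ + d)).indicator μ q := by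
              rcases lt_trichotomy q b₀ with h | h | h
              · have hev : ∀ᶠ b in nhds b₀, b ∈ Ioi q := isOpen_Ioi.eventually_mem h
                filter_upwards [hev.filter_mono nhdsWithin_le_nhds] with b hb
                rw [Set.indicator_of_notMem (fun hc => absurd hc.1 (not_le.mpr hb)),
                  Set.indicator_of_notMem (fun hc => absurd hc.1 (not_le.mpr h))]
              · exact absurd h hq1
              · rcases lt_trichotomy q (b₀ + d) with h' | h' | h'
                · have hev : ∀ᶠ b in nhds b₀, b ∈ Iio q ∩ Ioi (q - d) :=
                    (isOpen_Iio.inter isOpen_Ioi).eventually_mem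
                      (Set.mem_inter (show b₀ ∈ Iio q from h)
                        (show b₀ ∈ Ioi (q - d) by simp only [mem_Ioi]; linarith))
                  filter_upwards [hev.filter_mono nhdsWithin_le_nhds] with b hb
                  have hb1 : b < q := hb.1
                  have hb2 : q - d < b := hb.2
                  rw [Set.indicator_of_mem (Set.mem_Ico.mpr ⟨le_of_lt hb1, by linarith⟩),
                    Set.indicator_of_mem (Set.mem_Ico.mpr ⟨le_of_lt h, h'⟩)]
                · exact absurd h'.symm hq2.symm
                · have hev : ∀ᶠ b in nhds b₀, b ∈ Iio (q - d) :=
                    isOpen_Iio.eventually_mem (show b₀ ∈ Iio (q - d) by simp only [mem_Iio]; linarith)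
                  filter_upwards [hev.filter_mono nhdsWithin_le_nhds] with b hb
                  simp only [mem_Iio] at hb
                  rw [Set.indicator_of_notMem (fun hc => by have := hc.2; linarith),
                    Set.indicator_of_notMem (fun hc => by have := hc.2; linarith)]
            exact tendsto_const_nhds.congr' (hconst.mono fun b hb => hb.symm)
        have h3 := h2
        simp only [← hrw] at h3
        exact h3
      exact (ENNReal.tendsto_toReal (hGfin b₀ hb₀.1 hb₀.2)).comp key
    have hGc_le : G c ≤ β := by
      have h1 : G c = ∫⁻ q in Ioo c (c + d), μ q := by
        rw [hG_def]
        exact (setLIntegral_congr Ioo_ae_eq_Ico).symm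
      rw [h1]
      calc ∫⁻ q in Ioo c (c + d), μ q ≤ ∫⁻ q in Ioi c, μ q :=
            lintegral_mono_set (fun q hq => hq.1)
        _ ≤ OmA pbar x c := hdom c hc0
        _ ≤ β := hOm_c
    obtain ⟨a, ha0, hac, hGa_le, hGa_eq⟩ :
        ∃ a, 0 ≤ a ∧ a ≤ c ∧ G a ≤ β ∧ (0 < a → G a = β) := by
      by_cases h0 : G 0 ≤ β
      · exact ⟨0, le_rfl, hc0, h0, fun h => absurd h (lt_irrefl 0)⟩
      · have hmem : d * x j ∈ Icc ((fun b => (G b).toReal) c) ((fun b => (G b).toReal) 0) := by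
          constructor
          · have h2 := ENNReal.toReal_mono hβ_ne hGc_le
            rwa [hβ_def, ENNReal.toReal_ofReal (mul_nonneg hd.le (hx j))] at h2
          · have h2 := ENNReal.toReal_mono (hGfin 0 le_rfl hc0) (le_of_lt (not_le.mp h0))
            rwa [hβ_def, ENNReal.toReal_ofReal (mul_nonneg hd.le (hx j))] at h2
        obtain ⟨a, haI, hga⟩ := intermediate_value_Icc' hc0 hGcont hmem
        have hGa : G a = β := by
          have h1 : G a ≠ ⊤ := hGfin a haI.1 haI.2
          rw [← ENNReal.ofReal_toReal h1]
          rw [show (G a).toReal = d * x j from hga, hβ_def]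
        exact ⟨a, haI.1, haI.2, le_of_eq hGa, fun _ => hGa⟩
    set μ' : ℝ → ℝ≥0∞ := fun q => if q < a then μ q else μ (q + d) with hμ'_def
    have hμ'm : Measurable μ' :=
      Measurable.ite measurableSet_Iio hμ (hμ.comp (measurable_add_const d))
    have hmpd : MeasurePreserving (fun q : ℝ => q + d) volume volume :=
      measurePreserving_add_right volume d
    have hembd : MeasurableEmbedding (fun q : ℝ => q + d) :=
      (MeasurableEquiv.addRight d).measurableEmbedding
    have hsub_eq : (fun q : ℝ => q - d) = fun q : ℝ => q + (-d) :=
      funext fun q => sub_eq_add_neg q d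
    have hmpe : MeasurePreserving (fun q : ℝ => q - d) volume volume := by
      rw [hsub_eq]; exact measurePreserving_add_right volume (-d)
    have hembe : MeasurableEmbedding (fun q : ℝ => q - d) := by
      rw [hsub_eq]; exact (MeasurableEquiv.addRight (-d)).measurableEmbedding
    have hshift_Ioi : ∀ p : ℝ, ∫⁻ q in Ioi p, μ (q + d) = ∫⁻ q in Ioi (p + d), μ q := by
      intro p
      have h1 : (fun q : ℝ => q + d) ⁻¹' (Ioi (p + d)) = Ioi p := by
        ext q
        simp only [mem_preimage, mem_Ioi]
        constructor <;> intro <;> linarith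
      calc ∫⁻ q in Ioi p, μ (q + d)
          = ∫⁻ q in (fun q : ℝ => q + d) ⁻¹' (Ioi (p + d)), μ (q + d) := by rw [h1]
        _ = ∫⁻ q in Ioi (p + d), μ q := hmpd.setLIntegral_comp_preimage_emb hembd μ _
    have hshift_Ici : ∫⁻ q in Ici a, μ (q + d) = ∫⁻ q in Ici (a + d), μ q := by
      have h1 : (fun q : ℝ => q + d) ⁻¹' (Ici (a + d)) = Ici a := by
        ext q
        simp only [mem_preimage, mem_Ici]
        constructor <;> intro <;> linarith
      calc ∫⁻ q in Ici a, μ (q + d)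
          = ∫⁻ q in (fun q : ℝ => q + d) ⁻¹' (Ici (a + d)), μ (q + d) := by rw [h1]
        _ = ∫⁻ q in Ici (a + d), μ q := hmpd.setLIntegral_comp_preimage_emb hembd μ _
    set sh : Set ℝ → Set ℝ :=
      fun A => (A ∩ Iio a) ∪ ((fun q : ℝ => q - d) ⁻¹' (A ∩ Ici a)) with hsh_def
    have hpre_meas : ∀ B : Set ℝ, MeasurableSet B →
        MeasurableSet ((fun q : ℝ => q - d) ⁻¹' B) :=
      fun B hB => (measurable_id.sub measurable_const) hB
    have hsh_meas : ∀ A, MeasurableSet A → MeasurableSet (sh A) := by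
      intro A hA
      exact ((hA.inter measurableSet_Iio).union (hpre_meas _ (hA.inter measurableSet_Ici)))
    have hsh_sub : ∀ A, A ⊆ Ico 0 c → sh A ⊆ Ico 0 a ∪ Ico (a + d) T := by
      intro A hA q hq
      rcases hq with hq | hq
      · left; exact ⟨(hA hq.1).1, hq.2⟩
      · right
        have h1 : q - d ∈ A := hq.1
        have h2 : a ≤ q - d := hq.2
        have h3 := hA h1
        exact ⟨by linarith, by have := h3.2; linarith⟩
    have hsh_disj : ∀ A B : Set ℝ, Disjoint (A ∩ Iio a) ((fun q : ℝ => q - d) ⁻¹' (B ∩ Ici a)) := by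
      intro A B
      rw [Set.disjoint_left]
      intro q hq1 hq2
      have h1 : q < a := hq1.2
      have h2 : a ≤ q - d := hq2.2
      linarith
    have hsh_vol : ∀ A, MeasurableSet A → volume (sh A) = volume A := by
      intro A hA
      rw [hsh_def]
      rw [measure_union (hsh_disj A A) (hpre_meas _ (hA.inter measurableSet_Ici))]
      rw [hmpe.measure_preimage (hA.inter measurableSet_Ici).nullMeasurableSet]
      rw [← measure_union (by
          rw [Set.disjoint_left]; intro q h1 h2
          have hlt : q < a := h1.2
          have hge : a ≤ q := h2.2
          linarith) (hA.inter measurableSet_Ici)]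
      rw [← Set.inter_union_distrib_left, Set.Iio_union_Ici, Set.inter_univ]
    have hsh_int : ∀ A, MeasurableSet A → ∫⁻ q in sh A, μ q = ∫⁻ q in A, μ' q := by
      intro A hA
      rw [hsh_def]
      rw [lintegral_union (hpre_meas _ (hA.inter measurableSet_Ici)) (hsh_disj A A)]
      have h1 : ∫⁻ q in A ∩ Iio a, μ q = ∫⁻ q in A ∩ Iio a, μ' q :=
        setLIntegral_congr_fun (hA.inter measurableSet_Iio)
          (fun q hq => (if_pos hq.2).symm)
      have h2 : ∫⁻ q in (fun q : ℝ => q - d) ⁻¹' (A ∩ Ici a), μ q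
          = ∫⁻ q in A ∩ Ici a, μ' q := by
        have h3 : ∫⁻ q in (fun q : ℝ => q - d) ⁻¹' (A ∩ Ici a), μ q
            = ∫⁻ q in (fun q : ℝ => q - d) ⁻¹' (A ∩ Ici a), (fun y => μ (y + d)) (q - d) :=
          setLIntegral_congr_fun (hpre_meas _ (hA.inter measurableSet_Ici))
            (fun q _ => (congrArg μ (by ring)).symm)
        rw [h3, hmpe.setLIntegral_comp_preimage_emb hembe (fun y => μ (y + d)) _]
        exact setLIntegral_congr_fun (hA.inter measurableSet_Ici)
          (fun y hy => (if_neg (not_lt.mpr hy.2)).symm)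
      rw [h1, h2]
      rw [← lintegral_union (hA.inter measurableSet_Ici) (by
          rw [Set.disjoint_left]; intro q hq1 hq2
          have hlt : q < a := hq1.2
          have hge : a ≤ q := hq2.2
          linarith)]
      rw [← Set.inter_union_distrib_left, Set.Iio_union_Ici, Set.inter_univ]
    have hdom' : ∀ p : ℝ, 0 ≤ p →
        ∫⁻ q in Ioi p, μ' q ≤ OmA (fun i : {i : ι // i ≠ j} => pbar i.1) (fun i => x i.1) p := by
      intro p hp0
      rw [hOmA'_eq]
      by_cases hpa : a ≤ p
      · have h1 : ∫⁻ q in Ioi p, μ' q = ∫⁻ q in Ioi p, μ (q + d) :=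
          setLIntegral_congr_fun measurableSet_Ioi
            (fun q hq => if_neg (not_lt.mpr (le_trans hpa (le_of_lt hq))))
        rw [h1, hshift_Ioi p]
        exact le_trans (hdom (p + d) (by linarith)) (hOm_shift p)
      · push_neg at hpa
        have hGaβ : G a = β := hGa_eq (lt_of_le_of_lt hp0 hpa)
        have hsplit1 : Ioi p = Ioo p a ∪ Ici a := (Set.Ioo_union_Ici_eq_Ioi hpa).symm
        have hd1 : Disjoint (Ioo p a) (Ici a) := by
          rw [Set.disjoint_left]; intro q h1 h2; rw [mem_Ici] at h2; linarith [h1.2]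
        have hsplit2 : Ici a = Ico a (a + d) ∪ Ici (a + d) :=
          (Set.Ico_union_Ici_eq_Ici (by linarith)).symm
        have hd2 : Disjoint (Ico a (a + d)) (Ici (a + d)) := by
          rw [Set.disjoint_left]; intro q h1 h2; rw [mem_Ici] at h2; linarith [h1.2]
        have e1a : ∫⁻ q in Ioo p a, μ' q = ∫⁻ q in Ioo p a, μ q :=
          setLIntegral_congr_fun measurableSet_Ioo
            (fun q hq => if_pos hq.2)
        have e1b : ∫⁻ q in Ici a, μ' q = ∫⁻ q in Ici (a + d), μ q := by
          have h2 : ∫⁻ q in Ici a, μ' q = ∫⁻ q in Ici a, μ (q + d) :=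
            setLIntegral_congr_fun measurableSet_Ici
              (fun q hq => if_neg (not_lt.mpr hq))
          rw [h2, hshift_Ici]
        have e1 : ∫⁻ q in Ioi p, μ' q
            = (∫⁻ q in Ioo p a, μ q) + ∫⁻ q in Ici (a + d), μ q := by
          rw [hsplit1, lintegral_union measurableSet_Ici hd1, e1a, e1b]
        have e2 : ∫⁻ q in Ioi p, μ q
            = (∫⁻ q in Ioo p a, μ q)
              + ((∫⁻ q in Ico a (a + d), μ q) + ∫⁻ q in Ici (a + d), μ q) := by
          rw [hsplit1, lintegral_union measurableSet_Ici hd1, hsplit2,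
            lintegral_union measurableSet_Ici hd2]
        have hGaβ' : β = ∫⁻ q in Ico a (a + d), μ q := by rw [← hGaβ, hG_def]
        have e3 : (∫⁻ q in Ioi p, μ' q) + β = ∫⁻ q in Ioi p, μ q := by
          rw [e1, e2, hGaβ']; ring
        have h4 : (∫⁻ q in Ioi p, μ' q) + β ≤ Om' p + β := by
          rw [e3]; exact le_trans (hdom p hp0) (hOm_sub p)
        exact (ENNReal.add_le_add_iff_right hβ_ne).mp h4
    have hcard' : Fintype.card {i : ι // i ≠ j} = N := by
      simp [Fintype.card_subtype_compl, Fintype.card_subtype_eq, hcard]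
    obtain ⟨S', hS'm, hS'd, hS'U, hS'v, hS'e⟩ :=
      IH {i : ι // i ≠ j} hcard' (fun i => pbar i.1) (fun i => x i.1)
        (fun i => hp i.1) (fun i => hx i.1) μ' hμ'm hdom'
    have hc_sum : ∑ i : {i : ι // i ≠ j}, pbar i.1 = c :=
      (Finset.sum_subtype (Finset.univ.erase j)
        (fun i => by simp [Finset.mem_erase]) pbar).symm
    rw [hc_sum] at hS'U
    have hS'sub : ∀ i', S' i' ⊆ Ico 0 c := by
      intro i'
      rw [← hS'U]
      exact subset_iUnion S' i'
    refine ⟨fun i => if h : i = j then Ico a (a + d) else sh (S' ⟨i, h⟩), ?_, ?_, ?_, ?_, ?_⟩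
    · intro i
      by_cases h : i = j
      · simp only [dif_pos h]; exact measurableSet_Ico
      · simp only [dif_neg h]; exact hsh_meas _ (hS'm _)
    · intro i k hik
      simp only [Function.onFun]
      have hIcodisj : ∀ A : Set ℝ, A ⊆ Ico 0 c → Disjoint (Ico a (a + d)) (sh A) := by
        intro A hA
        rw [Set.disjoint_left]
        intro q hq1 hq2
        rcases hsh_sub A hA hq2 with h | h
        · exact absurd h.2 (not_lt.mpr hq1.1)
        · exact absurd hq1.2 (not_lt.mpr h.1)
      by_cases hi : i = j
      · have hk : ¬ k = j := fun h => hik (hi.trans h.symm)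
        rw [dif_pos hi, dif_neg hk]
        exact hIcodisj _ (hS'sub _)
      · by_cases hk : k = j
        · rw [dif_pos hk, dif_neg hi]
          exact (hIcodisj _ (hS'sub _)).symm
        · rw [dif_neg hi, dif_neg hk]
          have hne2 : (⟨i, hi⟩ : {i : ι // i ≠ j}) ≠ ⟨k, hk⟩ :=
            fun h => hik (congrArg Subtype.val h)
          have hdisj := hS'd hne2
          simp only [Function.onFun] at hdisj
          rw [hsh_def]
          apply Disjoint.union_left
          · apply Disjoint.union_right
            · exact hdisj.mono inf_le_left inf_le_left
            · exact hsh_disj _ _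
          · apply Disjoint.union_right
            · exact (hsh_disj _ _).symm
            · exact Disjoint.preimage _ (hdisj.mono inf_le_left inf_le_left)
    · ext q
      simp only [mem_iUnion]
      constructor
      · rintro ⟨i, hi⟩
        by_cases h : i = j
        · rw [dif_pos h] at hi
          exact ⟨by have := hi.1; linarith, by have := hi.2; linarith⟩
        · rw [dif_neg h] at hi
          rcases hsh_sub _ (hS'sub _) hi with h1 | h1
          · exact ⟨h1.1, by have := h1.2; linarith⟩
          · exact ⟨by have := h1.1; linarith, h1.2⟩
      · intro hq
        rcases lt_or_ge q a with h1 | h1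
        · have hqc : q ∈ Ico (0 : ℝ) c := ⟨hq.1, by linarith⟩
          have hq2 : q ∈ ⋃ i, S' i := by rw [hS'U]; exact hqc
          obtain ⟨i', hi'⟩ := mem_iUnion.mp hq2
          refine ⟨i'.1, ?_⟩
          rw [dif_neg i'.2]
          have : (⟨i'.1, i'.2⟩ : {i : ι // i ≠ j}) = i' := rfl
          rw [this]
          exact Or.inl ⟨hi', h1⟩
        · rcases lt_or_ge q (a + d) with h2 | h2
          · exact ⟨j, by rw [dif_pos rfl]; exact ⟨h1, h2⟩⟩
          · have hqc : q - d ∈ Ico (0 : ℝ) c := ⟨by linarith, by have := hq.2; linarith⟩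
            have hq2 : q - d ∈ ⋃ i, S' i := by rw [hS'U]; exact hqc
            obtain ⟨i', hi'⟩ := mem_iUnion.mp hq2
            refine ⟨i'.1, ?_⟩
            rw [dif_neg i'.2]
            have : (⟨i'.1, i'.2⟩ : {i : ι // i ≠ j}) = i' := rfl
            rw [this]
            exact Or.inr ⟨hi', by show a ≤ q - d; linarith⟩
    · intro i
      by_cases h : i = j
      · simp only [dif_pos h]
        rw [Real.volume_Ico, show a + d - a = d by ring, h, hd_def]
      · simp only [dif_neg h]
        rw [hsh_vol _ (hS'm _)]
        exact hS'v _
    · intro i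
      by_cases h : i = j
      · simp only [dif_pos h]
        have h2 : ENNReal.ofReal (pbar i * x i) = β := by rw [h, hβ_def, hd_def]
        rw [h2]
        exact hGa_le
      · simp only [dif_neg h]
        rw [hsh_int _ (hS'm _)]
        exact hS'e _
end FeasAux


/-- Sufficiency: if the E-p transform of a request profile is dominated pointwise by
the capacity curve of the fleet, then the profile is feasible. -/
theorem feasible_of_Etrans_le_capacity
    (n : ℕ) (hn : 1 ≤ n) (pbar x : Fin n → ℝ)
    (hp : ∀ i, 0 < pbar i) (hx : ∀ i, 0 ≤ x i)
    (P : ℝ → ℝ) (hPm : Measurable P) (hPnn : ∀ t, 0 ≤ t → 0 ≤ P t)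
    (hdom : ∀ p : ℝ, 0 ≤ p → Etrans P p ≤ capacity n pbar x p) :
    Feasible n pbar x P := by
  classical
  have hcap : ∀ p : ℝ, capacity n pbar x p = FeasAux.OmA pbar x p := by
    intro p
    unfold capacity Etrans Rprof FeasAux.OmA
    apply lintegral_congr
    intro t
    rw [FeasAux.ofReal_max_zero]
  set T : ℝ := ∑ i, pbar i with hT_def
  have hT0 : (0 : ℝ) ≤ T := Finset.sum_nonneg fun i _ => (hp i).le
  set μf : ℝ → ℝ≥0∞ := fun q => volume ({t | q < P t} ∩ Ioi 0) with hμf_def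
  have hμfm : Measurable μf := by
    apply Antitone.measurable
    intro q q' hqq'
    exact measure_mono (fun t ht => ⟨lt_of_le_of_lt hqq' ht.1, ht.2⟩)
  have hEt : ∀ p : ℝ, Etrans P p = ∫⁻ q in Ioi p, μf q := by
    intro p
    have h1 : ∀ t, ENNReal.ofReal (max (P t - p) 0) = volume (Ioi p ∩ Iio (P t)) := by
      intro t
      rw [Set.Ioi_inter_Iio, Real.volume_Ioo, FeasAux.ofReal_max_zero]
    unfold Etrans
    rw [lintegral_congr h1]
    exact FeasAux.slice_swap P hPm (Ioi p) measurableSet_Ioi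
  have hdomμ : ∀ p : ℝ, 0 ≤ p → ∫⁻ q in Ioi p, μf q ≤ FeasAux.OmA pbar x p := by
    intro p hp0
    rw [← hEt p, ← hcap p]
    exact hdom p hp0
  obtain ⟨S, hSm, hSd, hSU, hSv, hSe⟩ :=
    FeasAux.core n (Fin n) (Fintype.card_fin n) pbar x hp hx μf hμfm hdomμ
  set u : ℝ → Fin n → ℝ := fun t i => (volume (S i ∩ Iio (P t))).toReal with hu_def
  have hvol_le : ∀ (i : Fin n) (v : ℝ), volume (S i ∩ Iio v) ≤ ENNReal.ofReal (pbar i) :=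
    fun i v => (hSv i) ▸ measure_mono inter_subset_left
  have hvol_ne : ∀ (i : Fin n) (v : ℝ), volume (S i ∩ Iio v) ≠ ⊤ :=
    fun i v => ne_top_of_le_ne_top ENNReal.ofReal_ne_top (hvol_le i v)
  have hum : ∀ i : Fin n, Measurable (fun t => volume (S i ∩ Iio (P t))) := by
    intro i
    have h1 : Monotone (fun v => volume (S i ∩ Iio v)) :=
      fun v v' hvv' => measure_mono (fun q hq => ⟨hq.1, lt_of_lt_of_le hq.2 hvv'⟩)
    exact h1.measurable.comp hPm
  have huM : Measurable u := by
    apply measurable_pi_lambda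
    intro i
    exact ENNReal.measurable_toReal.comp (hum i)
  have hPT : ∀ᵐ t ∂(volume.restrict (Ioi (0 : ℝ))), P t ≤ T := by
    have hcapT : capacity n pbar x T = 0 := by
      unfold capacity Etrans
      have h1 : ∀ t, ENNReal.ofReal (max (Rprof n pbar x t - T) 0) = 0 := by
        intro t
        have h2 : Rprof n pbar x t ≤ T := by
          unfold Rprof
          apply Finset.sum_le_sum
          intro i _
          by_cases h : t ∈ Ico (0 : ℝ) (x i)
          · rw [Set.indicator_of_mem h]
          · rw [Set.indicator_of_notMem h]; exact (hp i).le
        exact ENNReal.ofReal_eq_zero.mpr (max_le (by linarith) le_rfl)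
      rw [lintegral_congr h1, lintegral_zero]
    have h0 : Etrans P T = 0 :=
      le_antisymm (le_trans (hdom T hT0) (le_of_eq hcapT)) zero_le
    unfold Etrans at h0
    have hmeas : Measurable (fun t => ENNReal.ofReal (max (P t - T) 0)) :=
      ENNReal.measurable_ofReal.comp ((hPm.sub measurable_const).max measurable_const)
    have h1 := (lintegral_eq_zero_iff hmeas).mp h0
    filter_upwards [h1] with t ht
    have h2 : max (P t - T) 0 ≤ 0 := ENNReal.ofReal_eq_zero.mp ht
    have h3 := le_max_left (P t - T) 0
    linarith
  refine ⟨u, huM, ?_, ?_⟩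
  · have hres : volume.restrict (Ici (0 : ℝ)) = volume.restrict (Ioi (0 : ℝ)) :=
      (Measure.restrict_congr_set Ioi_ae_eq_Ici).symm
    rw [hres]
    filter_upwards [hPT, ae_restrict_mem measurableSet_Ioi] with t hPt ht
    have hv0 : 0 ≤ P t := hPnn t (le_of_lt ht)
    constructor
    · have h1 : ∀ i : Fin n, volume (S i ∩ Iio (P t)) ≠ ⊤ := fun i => hvol_ne i (P t)
      have h2 : ∑ i, u t i = (∑ i, volume (S i ∩ Iio (P t))).toReal :=
        (ENNReal.toReal_sum (fun i _ => h1 i)).symm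
      rw [h2]
      have h3t : volume (⋃ i, S i ∩ Iio (P t)) = ∑' i : Fin n, volume (S i ∩ Iio (P t)) :=
        measure_iUnion (fun i k hik => Disjoint.mono inf_le_left inf_le_left (hSd hik))
          (fun i => (hSm i).inter measurableSet_Iio)
      have h3 : volume (⋃ i, S i ∩ Iio (P t)) = ∑ i, volume (S i ∩ Iio (P t)) := by
        rw [h3t, tsum_fintype]
      have h4 : (⋃ i, S i ∩ Iio (P t)) = Ico 0 (P t) := by
        rw [← Set.iUnion_inter, hSU]
        ext q
        simp only [mem_inter_iff, mem_Ico, mem_Iio]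
        constructor
        · rintro ⟨⟨hq1, _⟩, hq2⟩; exact ⟨hq1, hq2⟩
        · rintro ⟨hq1, hq2⟩; exact ⟨⟨hq1, lt_of_lt_of_le hq2 hPt⟩, hq2⟩
      rw [← h3, h4, Real.volume_Ico, sub_zero, ENNReal.toReal_ofReal hv0]
    · intro i
      constructor
      · exact ENNReal.toReal_nonneg
      · calc u t i ≤ (ENNReal.ofReal (pbar i)).toReal :=
              ENNReal.toReal_mono ENNReal.ofReal_ne_top (hvol_le i (P t))
          _ = pbar i := ENNReal.toReal_ofReal (hp i).le
  · intro t ht i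
    rw [intervalIntegral.integral_of_le ht]
    have h1 : ∫ s in Ioc (0 : ℝ) t, u s i
        = (∫⁻ s in Ioc (0 : ℝ) t, volume (S i ∩ Iio (P s))).toReal := by
      apply integral_toReal
      · exact ((hum i).aemeasurable).restrict
      · exact Filter.Eventually.of_forall fun s =>
          lt_of_le_of_lt (hvol_le i (P s)) ENNReal.ofReal_lt_top
    rw [h1]
    have h2 : ∫⁻ s in Ioc (0 : ℝ) t, volume (S i ∩ Iio (P s))
        ≤ ENNReal.ofReal (pbar i * x i) := by
      calc ∫⁻ s in Ioc (0 : ℝ) t, volume (S i ∩ Iio (P s))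
          ≤ ∫⁻ s in Ioi (0 : ℝ), volume (S i ∩ Iio (P s)) :=
            lintegral_mono_set (fun s hs => hs.1)
        _ = ∫⁻ q in S i, μf q := FeasAux.slice_swap P hPm (S i) (hSm i)
        _ ≤ ENNReal.ofReal (pbar i * x i) := hSe i
    calc (∫⁻ s in Ioc (0 : ℝ) t, volume (S i ∩ Iio (P s))).toReal
        ≤ (ENNReal.ofReal (pbar i * x i)).toReal :=
          ENNReal.toReal_mono ENNReal.ofReal_ne_top h2
      _ = pbar i * x i := ENNReal.toReal_ofReal (mul_nonneg (hp i).le (hx i))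
end

section
/- (Maximum feasible pulse) Let M > 0 and T > 0. The pulse profile P(t) = M·1_{[0,T)}(t) is feasible for the fleet (p̄, x) if and only if T·max{M − p, 0} ≤ Ω_{p̄,x}(p) for all p ≥ 0. -/
open MeasureTheory Set
open scoped ENNReal

lemma indicator_int (T c a : ℝ) (hT : 0 < T) (ha : 0 ≤ a) :
    ∫ t in Ioo (0:ℝ) T, (Ico (0:ℝ) a).indicator (fun _ => c) t = c * min T a := by
  rw [MeasureTheory.setIntegral_indicator measurableSet_Ico]
  have h : Ioo (0:ℝ) T ∩ Ico 0 a = Ioo 0 (min T a) := by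
    ext s
    exact ⟨fun ⟨⟨h1,h2⟩,⟨_,h4⟩⟩ => ⟨h1, lt_min h2 h4⟩,
      fun ⟨h1,h2⟩ => ⟨⟨h1,(lt_min_iff.1 h2).1⟩,⟨h1.le,(lt_min_iff.1 h2).2⟩⟩⟩
  rw [h, setIntegral_const, measureReal_def, Real.volume_Ioo, smul_eq_mul,
    ENNReal.toReal_ofReal (by simp [le_min hT.le ha])]
  ring



lemma Rprof_int (n : ℕ) (pbar x : Fin n → ℝ) (T : ℝ) (hT : 0 < T) (hx : ∀ i, 0 ≤ x i) :
    ∫ t in Ioo (0:ℝ) T, Rprof n pbar x t = ∑ i, pbar i * min T (x i) := by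
  unfold Rprof
  rw [integral_finset_sum]
  · exact Finset.sum_congr rfl fun i _ => indicator_int T (pbar i) (x i) hT (hx i)
  · intro i _
    exact (integrable_const (pbar i)).indicator measurableSet_Ico





lemma Rprof_integrable (n : ℕ) (pbar x : Fin n → ℝ) (T : ℝ) :
    IntegrableOn (Rprof n pbar x) (Ioo (0:ℝ) T) := by
  apply integrable_finset_sum
  intro i _
  exact (integrable_const (pbar i)).indicator measurableSet_Ico

lemma Rprof_lb (n : ℕ) (pbar x : Fin n → ℝ) (hp : ∀ i, 0 < pbar i) (T t : ℝ)
    (h0 : 0 ≤ t) (htT : t < T) :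
    ∑ i ∈ Finset.univ.filter (fun i => T < x i), pbar i ≤ Rprof n pbar x t := by
  unfold Rprof
  rw [show (∑ i ∈ Finset.univ.filter (fun i => T < x i), pbar i)
      = ∑ i ∈ Finset.univ.filter (fun i => T < x i),
          Set.indicator (Ico (0:ℝ) (x i)) (fun _ => pbar i) t from
    Finset.sum_congr rfl fun i hi => by
      rw [Set.indicator_of_mem (Set.mem_Ico.mpr ⟨h0, htT.trans (Finset.mem_filter.1 hi).2⟩)]]
  apply Finset.sum_le_sum_of_subset_of_nonneg (Finset.filter_subset _ _)
  intro i _ _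
  exact Set.indicator_nonneg (fun _ _ => (hp i).le) t

lemma Rprof_ub (n : ℕ) (pbar x : Fin n → ℝ) (hp : ∀ i, 0 < pbar i) (T t : ℝ)
    (hTt : T ≤ t) :
    Rprof n pbar x t ≤ ∑ i ∈ Finset.univ.filter (fun i => T < x i), pbar i := by
  unfold Rprof
  rw [Finset.sum_filter]
  apply Finset.sum_le_sum
  intro i _
  by_cases h : T < x i
  · simp only [if_pos h]
    exact Set.indicator_apply_le' (fun _ => le_refl _) (fun _ => (hp i).le)
  · simp only [if_neg h]
    rw [Set.indicator_of_notMem]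
    intro hmem
    exact absurd ((Set.mem_Ico.mp hmem).2.trans_le ((le_of_not_gt h).trans hTt)) (lt_irrefl t)

lemma cap_ge (n : ℕ) (pbar x : Fin n → ℝ) (T p : ℝ) (hT : 0 < T) :
    ENNReal.ofReal (∫ t in Ioo (0:ℝ) T, (Rprof n pbar x t - p)) ≤ capacity n pbar x p := by
  have hint : IntegrableOn (fun t => Rprof n pbar x t - p) (Ioo (0:ℝ) T) :=
    (Rprof_integrable n pbar x T).sub (integrableOn_const (by simp))
  calc ENNReal.ofReal (∫ t in Ioo (0:ℝ) T, (Rprof n pbar x t - p))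
      ≤ ENNReal.ofReal (∫ t in Ioo (0:ℝ) T, max (Rprof n pbar x t - p) 0) :=
        ENNReal.ofReal_le_ofReal (integral_mono hint hint.pos_part
          (fun t => le_max_left _ _))
    _ = ∫⁻ t in Ioo (0:ℝ) T, ENNReal.ofReal (max (Rprof n pbar x t - p) 0) :=
        ofReal_integral_eq_lintegral_ofReal hint.pos_part
          (Filter.Eventually.of_forall fun t => le_max_right _ _)
    _ ≤ ∫⁻ t in Ioi (0:ℝ), ENNReal.ofReal (max (Rprof n pbar x t - p) 0) :=
        lintegral_mono_set (fun t ht => ht.1)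

lemma Rsub_int (n : ℕ) (pbar x : Fin n → ℝ) (T p : ℝ) (hT : 0 < T) (hx : ∀ i, 0 ≤ x i) :
    ∫ t in Ioo (0:ℝ) T, (Rprof n pbar x t - p)
      = (∑ i, pbar i * min T (x i)) - p * T := by
  rw [integral_sub (Rprof_integrable n pbar x T) (integrableOn_const (by simp)),
    Rprof_int n pbar x T hT hx, setIntegral_const, measureReal_def, Real.volume_Ioo, smul_eq_mul,
    ENNReal.toReal_ofReal (by linarith)]
  ring

lemma cap_le (n : ℕ) (pbar x : Fin n → ℝ) (hp : ∀ i, 0 < pbar i) (T : ℝ) (hT : 0 < T) :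
    capacity n pbar x (∑ i ∈ Finset.univ.filter (fun i => T < x i), pbar i)
      ≤ ENNReal.ofReal (∫ t in Ioo (0:ℝ) T,
          (Rprof n pbar x t - ∑ i ∈ Finset.univ.filter (fun i => T < x i), pbar i)) := by
  set p₀ := ∑ i ∈ Finset.univ.filter (fun i => T < x i), pbar i with hp₀
  have hunion : Ioo (0:ℝ) T ∪ Ici T = Ioi 0 := Set.Ioo_union_Ici_eq_Ioi hT
  have hdisj : Disjoint (Ioo (0:ℝ) T) (Ici T) :=
    Set.disjoint_left.mpr fun t ht ht' => absurd ht.2 (not_lt.2 ht')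
  have hint : IntegrableOn (fun t => Rprof n pbar x t - p₀) (Ioo (0:ℝ) T) :=
    (Rprof_integrable n pbar x T).sub (integrableOn_const (by simp))
  unfold capacity Etrans
  rw [← hunion, lintegral_union measurableSet_Ici hdisj]
  have h2 : ∫⁻ t in Ici T, ENNReal.ofReal (max (Rprof n pbar x t - p₀) 0) = 0 := by
    rw [setLIntegral_congr_fun measurableSet_Ici
      (fun t (ht : T ≤ t) => by
        rw [max_eq_right (sub_nonpos.2 (Rprof_ub n pbar x hp T t ht)), ENNReal.ofReal_zero]),
      lintegral_zero]
  rw [h2, add_zero,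
    setLIntegral_congr_fun measurableSet_Ioo
      (fun t (ht : t ∈ Ioo (0:ℝ) T) => by
        rw [max_eq_left (sub_nonneg.2 (Rprof_lb n pbar x hp T t ht.1.le ht.2))]),
    ← ofReal_integral_eq_lintegral_ofReal hint
      ((ae_restrict_iff' measurableSet_Ioo).2 (Filter.Eventually.of_forall
        fun t ht => sub_nonneg.2 (Rprof_lb n pbar x hp T t ht.1.le ht.2)))]

lemma p0T_le_S (n : ℕ) (pbar x : Fin n → ℝ) (hp : ∀ i, 0 < pbar i) (hx : ∀ i, 0 ≤ x i)
    (T : ℝ) (hT : 0 < T) :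
    (∑ i ∈ Finset.univ.filter (fun i => T < x i), pbar i) * T
      ≤ ∑ i, pbar i * min T (x i) := by
  rw [Finset.sum_mul]
  have : ∀ i ∈ Finset.univ.filter (fun i => T < x i), pbar i * T = pbar i * min T (x i) := by
    intro i hi
    rw [min_eq_left (Finset.mem_filter.1 hi).2.le]
  rw [Finset.sum_congr rfl this]
  apply Finset.sum_le_sum_of_subset_of_nonneg (Finset.filter_subset _ _)
  intro i _ _
  exact mul_nonneg (hp i).le (le_min hT.le (hx i))

lemma energy_to_S (n : ℕ) (pbar x : Fin n → ℝ) (hp : ∀ i, 0 < pbar i) (hx : ∀ i, 0 ≤ x i)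
    (M T : ℝ) (hM : 0 < M) (hT : 0 < T)
    (h : ∀ p : ℝ, 0 ≤ p → ENNReal.ofReal (T * max (M - p) 0) ≤ capacity n pbar x p) :
    M * T ≤ ∑ i, pbar i * min T (x i) := by
  set p₀ := ∑ i ∈ Finset.univ.filter (fun i => T < x i), pbar i with hp₀
  have hp₀nn : 0 ≤ p₀ := Finset.sum_nonneg fun i _ => (hp i).le
  have hS : p₀ * T ≤ ∑ i, pbar i * min T (x i) := p0T_le_S n pbar x hp hx T hT
  have key := (h p₀ hp₀nn).trans ((cap_le n pbar x hp T hT).trans_eq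
    (by rw [Rsub_int n pbar x T p₀ hT hx]))
  rw [ENNReal.ofReal_le_ofReal_iff (by linarith)] at key
  by_cases hMp : M ≤ p₀
  · calc M * T ≤ p₀ * T := by nlinarith
      _ ≤ _ := hS
  · rw [max_eq_left (by linarith)] at key
    nlinarith

lemma S_to_energy (n : ℕ) (pbar x : Fin n → ℝ) (hx : ∀ i, 0 ≤ x i)
    (M T : ℝ) (hM : 0 < M) (hT : 0 < T)
    (h : M * T ≤ ∑ i, pbar i * min T (x i)) :
    ∀ p : ℝ, 0 ≤ p → ENNReal.ofReal (T * max (M - p) 0) ≤ capacity n pbar x p := by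
  intro p hpnn
  by_cases hMp : M ≤ p
  · rw [max_eq_right (by linarith), mul_zero, ENNReal.ofReal_zero]
    exact zero_le
  · rw [max_eq_left (by linarith)]
    refine le_trans ?_ (cap_ge n pbar x T p hT)
    apply ENNReal.ofReal_le_ofReal
    rw [Rsub_int n pbar x T p hT hx]
    nlinarith



lemma feasible_to_S (n : ℕ) (pbar x : Fin n → ℝ) (hp : ∀ i, 0 < pbar i) (hx : ∀ i, 0 ≤ x i)
    (M T : ℝ) (hM : 0 < M) (hT : 0 < T)
    (h : Feasible n pbar x (fun t => Set.indicator (Ico (0 : ℝ) T) (fun _ => M) t)) :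
    M * T ≤ ∑ i, pbar i * min T (x i) := by
  obtain ⟨u, hmeas, hae, henergy⟩ := h
  have hsub : Ioc (0:ℝ) T ⊆ Ici 0 := fun t ht => ht.1.le
  have hae' : ∀ᵐ t ∂(volume.restrict (Ioc (0:ℝ) T)),
      (∑ i, u t i) = (Ico (0:ℝ) T).indicator (fun _ => M) t
        ∧ ∀ i, 0 ≤ u t i ∧ u t i ≤ pbar i :=
    ae_restrict_of_ae_restrict_of_subset hsub hae
  have hui : ∀ i, Measurable fun s => u s i := fun i => (measurable_pi_apply i).comp hmeas
  have hint : ∀ i, IntegrableOn (fun s => u s i) (Ioc (0:ℝ) T) := by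
    intro i
    apply Integrable.mono' (integrable_const (pbar i)) (hui i).aestronglyMeasurable
    filter_upwards [hae'] with t ht
    rw [Real.norm_eq_abs, abs_of_nonneg (ht.2 i).1]
    exact (ht.2 i).2
  have hPint : M * T = ∫ t in Ioc (0:ℝ) T, (Ico (0:ℝ) T).indicator (fun _ => M) t := by
    rw [setIntegral_indicator measurableSet_Ico,
      show Ioc (0:ℝ) T ∩ Ico 0 T = Ioo 0 T by
        ext s
        exact ⟨fun ⟨⟨h1, _⟩, ⟨_, h4⟩⟩ => ⟨h1, h4⟩, fun ⟨h1, h2⟩ => ⟨⟨h1, h2.le⟩, ⟨h1.le, h2⟩⟩⟩,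
      setIntegral_const, measureReal_def, Real.volume_Ioo, smul_eq_mul,
      ENNReal.toReal_ofReal (by linarith)]
    ring
  have hsum : ∫ t in Ioc (0:ℝ) T, (Ico (0:ℝ) T).indicator (fun _ => M) t
      = ∑ i, ∫ t in Ioc (0:ℝ) T, u t i := by
    rw [← integral_finset_sum _ (fun i _ => hint i)]
    apply integral_congr_ae
    filter_upwards [hae'] with t ht
    exact ht.1.symm
  rw [hPint, hsum]
  apply Finset.sum_le_sum
  intro i _
  have ha : ∫ t in Ioc (0:ℝ) T, u t i ≤ pbar i * x i := by
    rw [← intervalIntegral.integral_of_le hT.le]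
    exact henergy T hT.le i
  have hb : ∫ t in Ioc (0:ℝ) T, u t i ≤ pbar i * T := by
    calc ∫ t in Ioc (0:ℝ) T, u t i ≤ ∫ _ in Ioc (0:ℝ) T, pbar i := by
          apply integral_mono_ae (hint i) (integrable_const _)
          filter_upwards [hae'] with t ht
          exact (ht.2 i).2
      _ = pbar i * T := by
          rw [setIntegral_const, measureReal_def, Real.volume_Ioc, smul_eq_mul,
            ENNReal.toReal_ofReal (by linarith)]
          ring
  rcases min_cases T (x i) with ⟨hmin, _⟩ | ⟨hmin, _⟩
  · rw [hmin]; exact hb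
  · rw [hmin]; exact ha

lemma S_to_feasible (n : ℕ) (pbar x : Fin n → ℝ) (hp : ∀ i, 0 < pbar i) (hx : ∀ i, 0 ≤ x i)
    (M T : ℝ) (hM : 0 < M) (hT : 0 < T)
    (h : M * T ≤ ∑ i, pbar i * min T (x i)) :
    Feasible n pbar x (fun t => Set.indicator (Ico (0 : ℝ) T) (fun _ => M) t) := by
  set S := ∑ i, pbar i * min T (x i) with hSdef
  have hS : 0 < S := lt_of_lt_of_le (by positivity) h
  set c : Fin n → ℝ := fun i => M * (pbar i * min T (x i)) / S with hc
  have hcnn : ∀ i, 0 ≤ c i := fun i =>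
    div_nonneg (mul_nonneg hM.le (mul_nonneg (hp i).le (le_min hT.le (hx i)))) hS.le
  have hcub : ∀ i, c i ≤ pbar i := by
    intro i
    rw [hc, div_le_iff₀ hS]
    have h1 : min T (x i) ≤ T := min_le_left _ _
    have h2 : 0 ≤ min T (x i) := le_min hT.le (hx i)
    nlinarith [mul_le_mul_of_nonneg_left (mul_le_mul_of_nonneg_left h1 hM.le) (hp i).le,
      mul_le_mul_of_nonneg_left h (hp i).le]
  refine ⟨fun t i => (Ico (0:ℝ) T).indicator (fun _ => c i) t,
    measurable_pi_lambda _ fun i => measurable_const.indicator measurableSet_Ico, ?_, ?_⟩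
  · apply Filter.Eventually.of_forall
    intro t
    constructor
    · by_cases ht : t ∈ Ico (0:ℝ) T
      · simp only [Set.indicator_of_mem ht]
        rw [hc]
        rw [← Finset.sum_div, ← Finset.mul_sum, ← hSdef, mul_div_assoc, div_self hS.ne',
          mul_one]
      · simp only [Set.indicator_of_notMem ht, Finset.sum_const_zero]
    · intro i
      constructor
      · exact Set.indicator_nonneg (fun _ _ => hcnn i) t
      · exact Set.indicator_apply_le' (fun _ => hcub i) (fun _ => (hp i).le)
  · intro t ht i
    rw [intervalIntegral.integral_of_le ht, setIntegral_indicator measurableSet_Ico,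
      setIntegral_const, smul_eq_mul]
    have hvol : (volume (Ioc (0:ℝ) t ∩ Ico 0 T)).toReal ≤ T := by
      calc (volume (Ioc (0:ℝ) t ∩ Ico 0 T)).toReal
          ≤ (volume (Ico (0:ℝ) T)).toReal := by
            apply ENNReal.toReal_mono
            · rw [Real.volume_Ico]; exact ENNReal.ofReal_ne_top
            · exact measure_mono inter_subset_right
        _ = T := by rw [Real.volume_Ico, ENNReal.toReal_ofReal (by linarith)]; ring_nf
    calc (volume (Ioc (0:ℝ) t ∩ Ico 0 T)).toReal * c i ≤ T * c i :=
          mul_le_mul_of_nonneg_right hvol (hcnn i)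
      _ ≤ pbar i * x i := by
          rw [hc, mul_div_assoc']
          rw [div_le_iff₀ hS]
          have h1 : min T (x i) ≤ x i := min_le_right _ _
          have h2 : 0 ≤ min T (x i) := le_min hT.le (hx i)
          nlinarith [mul_le_mul_of_nonneg_right h (mul_nonneg (hp i).le h2),
            mul_le_mul_of_nonneg_left (mul_le_mul_of_nonneg_left h1 (hp i).le) hS.le]


/-- Maximum feasible pulse: the pulse of magnitude `M` and duration `T` is feasible
for the fleet iff `T · max{M − p, 0} ≤ Ω_{p̄,x}(p)` for all `p ≥ 0`. -/
theorem pulse_feasible_iff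
    (n : ℕ) (hn : 1 ≤ n) (pbar x : Fin n → ℝ)
    (hp : ∀ i, 0 < pbar i) (hx : ∀ i, 0 ≤ x i)
    (M T : ℝ) (hM : 0 < M) (hT : 0 < T) :
    Feasible n pbar x (fun t => Set.indicator (Ico (0 : ℝ) T) (fun _ => M) t) ↔
      ∀ p : ℝ, 0 ≤ p → ENNReal.ofReal (T * max (M - p) 0) ≤ capacity n pbar x p := by
  constructor
  · intro hfeas
    exact S_to_energy n pbar x hx M T hM hT (feasible_to_S n pbar x hp hx M T hM hT hfeas)
  · intro hen
    exact S_to_feasible n pbar x hp hx M T hM hT (energy_to_S n pbar x hp hx M T hM hT hen)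
end
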